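/- arXiv:1305.5621 — 4 statements merged into one kernel-verified Lean document; each statement's English description precedes it below -/
import Mathlib

section
/- Let X and Y be independent real-valued random variables. Then the essential infimum of X+Y equals the sum of the essential infima of X and Y, i.e. ess inf(X+Y) = ess inf X + ess inf Y (where essential infimum is with respect to the underlying probability measure, possibly equal to -infinity). -/
open MeasureTheory ProbabilityTheory

/-- If the `EReal`-valued essential infimum of a real function is `< c`, then
`{f < c}` has positive measure. -/
lemma aux_pos_meas {Ω : Type*} [MeasurableSpace Ω] (μ : Measure Ω) [IsProbabilityMeasure μ]
    (f : Ω → ℝ) (c : ℝ) (h : essInf (fun ω => ((f ω : ℝ) : EReal)) μ < (c : EReal)) :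
    0 < μ {ω | f ω < c} := by
  by_contra hcon
  push_neg at hcon
  have h0 : μ {ω | f ω < c} = 0 := le_antisymm hcon zero_le
  have hae0 : ∀ᵐ ω ∂μ, c ≤ f ω := by
    rw [ae_iff]
    simpa using h0
  have hae : ∀ᵐ ω ∂μ, (c : EReal) ≤ ((f ω : ℝ) : EReal) := by
    filter_upwards [hae0] with ω hω
    exact_mod_cast hω
  exact absurd (le_essInf_of_ae_le _ hae) (not_le.2 h)

/-- essInf of a coercion of a real function is `< ⊤`. -/
lemma aux_lt_top {Ω : Type*} [MeasurableSpace Ω] (μ : Measure Ω) [IsProbabilityMeasure μ]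
    (f : Ω → ℝ) : essInf (fun ω => ((f ω : ℝ) : EReal)) μ < ⊤ := by
  have hae : ∀ᵐ ω ∂μ, essInf (fun ω => ((f ω : ℝ) : EReal)) μ ≤ ((f ω : ℝ) : EReal) :=
    ae_essInf_le
  obtain ⟨ω, hω⟩ := hae.exists
  exact lt_of_le_of_lt hω (EReal.coe_lt_top _)

/-- approximation from above of a sum of `EReal`s that are `< ⊤`. -/
lemma aux_exists (a b : EReal) (ha : a < ⊤) (hb : b < ⊤) (r : ℝ) (hr : a + b < (r : EReal)) :
    ∃ c d : ℝ, a < (c : EReal) ∧ b < (d : EReal) ∧ c + d < r := by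
  rcases eq_or_ne a ⊥ with haB | haB
  · rcases eq_or_ne b ⊥ with hbB | hbB
    · exact ⟨r/2 - 1, r/2, haB ▸ EReal.bot_lt_coe _, hbB ▸ EReal.bot_lt_coe _, by linarith⟩
    · lift b to ℝ using ⟨hb.ne, hbB⟩
      exact ⟨r - b - 2, b + 1, haB ▸ EReal.bot_lt_coe _,
        by exact_mod_cast lt_add_one b, by linarith⟩
  · lift a to ℝ using ⟨ha.ne, haB⟩
    rcases eq_or_ne b ⊥ with hbB | hbB
    · exact ⟨a + 1, r - a - 2, by exact_mod_cast lt_add_one a,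
        hbB ▸ EReal.bot_lt_coe _, by linarith⟩
    · lift b to ℝ using ⟨hb.ne, hbB⟩
      have hab : a + b < r := by exact_mod_cast hr
      refine ⟨a + (r - a - b)/3, b + (r - a - b)/3, ?_, ?_, by linarith⟩
      · exact_mod_cast by linarith
      · exact_mod_cast by linarith

/-- For independent real-valued random variables `X` and `Y` on a
probability space, the essential infimum of `X + Y` (taken in `EReal`, so that the
value `-∞` is allowed) equals the sum of the essential infima of `X` and `Y`. -/
theorem stmt0 {Ω : Type*} [MeasurableSpace Ω] (μ : Measure Ω) [IsProbabilityMeasure μ]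
    (X Y : Ω → ℝ) (hX : Measurable X) (hY : Measurable Y)
    (hindep : IndepFun X Y μ) :
    essInf (fun ω => ((X ω + Y ω : ℝ) : EReal)) μ
      = essInf (fun ω => ((X ω : ℝ) : EReal)) μ
        + essInf (fun ω => ((Y ω : ℝ) : EReal)) μ := by
  have ha_top := aux_lt_top μ X
  have hb_top := aux_lt_top μ Y
  -- key upper bound: for reals c > a, d > b, essInf (X+Y) ≤ c + d
  have key : ∀ c d : ℝ, essInf (fun ω => ((X ω : ℝ) : EReal)) μ < (c : EReal) →
      essInf (fun ω => ((Y ω : ℝ) : EReal)) μ < (d : EReal) →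
      essInf (fun ω => ((X ω + Y ω : ℝ) : EReal)) μ ≤ ((c + d : ℝ) : EReal) := by
    intro c d hc hd
    by_contra hcon
    push_neg at hcon
    have hXc : 0 < μ {ω | X ω < c} := aux_pos_meas μ X c hc
    have hYd : 0 < μ {ω | Y ω < d} := aux_pos_meas μ Y d hd
    have hmul : μ (X ⁻¹' Set.Iio c ∩ Y ⁻¹' Set.Iio d)
        = μ (X ⁻¹' Set.Iio c) * μ (Y ⁻¹' Set.Iio d) :=
      hindep.measure_inter_preimage_eq_mul _ _ measurableSet_Iio measurableSet_Iio
    have hpos : 0 < μ (X ⁻¹' Set.Iio c ∩ Y ⁻¹' Set.Iio d) := by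
      rw [hmul]
      exact ENNReal.mul_pos hXc.ne' hYd.ne'
    -- but a.e. X+Y ≥ essInf > c+d
    have hae : ∀ᵐ ω ∂μ, essInf (fun ω => ((X ω + Y ω : ℝ) : EReal)) μ
        ≤ ((X ω + Y ω : ℝ) : EReal) := ae_essInf_le
    have hae' : ∀ᵐ ω ∂μ, ¬ (X ω + Y ω < c + d) := by
      filter_upwards [hae] with ω hω hlt
      have hlt' : ((X ω + Y ω : ℝ) : EReal) < ((c + d : ℝ) : EReal) :=
        EReal.coe_lt_coe_iff.2 hlt
      exact absurd (hω.trans hlt'.le) (not_le.2 hcon)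
    have hzero : μ {ω | X ω + Y ω < c + d} = 0 := by
      have := hae'
      rw [ae_iff] at this
      simpa using this
    have hsub : (X ⁻¹' Set.Iio c ∩ Y ⁻¹' Set.Iio d) ⊆ {ω | X ω + Y ω < c + d} := by
      rintro ω ⟨h1, h2⟩
      exact add_lt_add (show X ω < c from h1) (show Y ω < d from h2)
    exact absurd (measure_mono_null hsub hzero) hpos.ne'
  apply le_antisymm
  · rw [← EReal.le_of_forall_lt_iff_le]
    intro r hr
    obtain ⟨c, d, hc, hd, hcd⟩ := aux_exists _ _ ha_top hb_top r hr
    exact (key c d hc hd).trans (EReal.coe_le_coe_iff.2 hcd.le)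
  · have haeX : ∀ᵐ ω ∂μ, essInf (fun ω => ((X ω : ℝ) : EReal)) μ ≤ ((X ω : ℝ) : EReal) :=
      ae_essInf_le
    have haeY : ∀ᵐ ω ∂μ, essInf (fun ω => ((Y ω : ℝ) : EReal)) μ ≤ ((Y ω : ℝ) : EReal) :=
      ae_essInf_le
    refine le_essInf_of_ae_le _ ?_
    filter_upwards [haeX, haeY] with ω h1 h2
    calc essInf (fun ω => ((X ω : ℝ) : EReal)) μ + essInf (fun ω => ((Y ω : ℝ) : EReal)) μ
        ≤ ((X ω : ℝ) : EReal) + ((Y ω : ℝ) : EReal) := add_le_add h1 h2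
      _ = ((X ω + Y ω : ℝ) : EReal) := (EReal.coe_add _ _).symm
end

section
/- Let Y be a random variable with E(e^Y) < ∞ and define O(x) := E((e^{Y−x} − 1)^+) for x ≥ 0 and O(x) := E((1 − e^{Y−x})^+) for x < 0. Then for any C ≥ 0 and any u ∈ ℝ \ {0}, |∫_{−C}^{∞} O(x) e^{iux} dx| ≤ E(e^Y) + (1 + 2|u|)/u². -/
open MeasureTheory Filter Topology Set

lemma norm_cexp_I (u x : ℝ) : ‖Complex.exp (Complex.I * u * x)‖ = 1 := by
  rw [Complex.norm_exp]; simp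

lemma IuneZero {u : ℝ} (hu : u ≠ 0) : (Complex.I * u : ℂ) ≠ 0 := by
  simp [Complex.ext_iff, hu]

lemma Iu1neZero (u : ℝ) : (Complex.I * u - 1 : ℂ) ≠ 0 := by
  intro h
  have := congrArg Complex.re h
  simp [Complex.ext_iff] at this

lemma normIu1_ge_one (u : ℝ) : 1 ≤ ‖(Complex.I * u - 1 : ℂ)‖ := by
  have := Complex.abs_re_le_norm (Complex.I * u - 1)
  simpa using this

lemma normIu1_ge_u (u : ℝ) : |u| ≤ ‖(Complex.I * u - 1 : ℂ)‖ := by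
  have := Complex.abs_im_le_norm (Complex.I * u - 1)
  simpa using this

lemma numer_bound {u t : ℝ} (h0 : 0 < t) (h1 : t ≤ 1) :
    ‖(1 + Complex.I * u * ((t : ℂ) - 1))‖ ≤ ‖(Complex.I * u - 1 : ℂ)‖ := by
  rw [Complex.norm_def, Complex.norm_def]
  apply Real.sqrt_le_sqrt
  have h2 : (t - 1) ^ 2 ≤ 1 := by nlinarith
  have h3 : u ^ 2 * (t - 1) ^ 2 ≤ u ^ 2 := by nlinarith [sq_nonneg u]
  simp only [Complex.normSq_apply]
  simp
  nlinarith [h3]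


lemma P2_bound {u y a : ℝ} (hu : u ≠ 0) (hya : y ≤ a) :
    ‖(1 - Complex.exp (Complex.I * u * a)) / (Complex.I * u)
      - (Real.exp y : ℂ) * ((1 - Complex.exp ((Complex.I * u - 1) * a)) / (Complex.I * u - 1))‖
      ≤ Real.exp y + 2 / |u| := by
  set c1 : ℂ := Complex.I * u with hc1
  set c2 : ℂ := Complex.I * u - 1 with hc2
  have hc1' : c1 ≠ 0 := IuneZero hu
  have hc2' : c2 ≠ 0 := Iu1neZero u
  have hcc : c2 = c1 - 1 := by rw [hc2, hc1]
  set t : ℝ := Real.exp (y - a) with ht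
  set R : ℂ := (Real.exp y : ℂ) with hR
  set T : ℂ := (t : ℂ) with hT
  set E1 : ℂ := Complex.exp (c1 * a) with hE1
  set E2 : ℂ := Complex.exp (c2 * a) with hE2
  have he : R * E2 = E1 * T := by
    have h2 : c2 * a = c1 * a - a := by rw [hcc]; ring
    rw [hR, hT, hE1, hE2, h2, Complex.exp_sub, ht]
    push_cast
    rw [Complex.exp_sub]
    field_simp [Complex.exp_ne_zero]
  have key : (1 - E1) / c1 - R * ((1 - E2) / c2)
      = 1 / c1 - R / c2 + E1 * ((1 + c1 * (T - 1)) / (c1 * c2)) := by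
    field_simp
    linear_combination c1 * he - E1 * c1 * c2 * hcc + c1 * c2 * E1 * hcc
  rw [key]
  have hc2pos : (0:ℝ) < ‖c2‖ := lt_of_lt_of_le one_pos (normIu1_ge_one u)
  have n1 : ‖(1 : ℂ) / c1‖ = 1 / |u| := by rw [norm_div, norm_one, hc1]; simp
  have n2 : ‖R / c2‖ ≤ Real.exp y := by
    rw [norm_div]
    have : ‖R‖ = Real.exp y := by rw [hR]; simp [Real.abs_exp]
    rw [this]
    exact div_le_self (Real.exp_pos y).le (normIu1_ge_one u)
  have n3 : ‖E1 * ((1 + c1 * (T - 1)) / (c1 * c2))‖ ≤ 1 / |u| := by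
    rw [norm_mul, norm_div, norm_mul]
    have hE1n : ‖E1‖ = 1 := norm_cexp_I u a
    rw [hE1n, one_mul]
    have hnum : ‖1 + c1 * (T - 1)‖ ≤ ‖c2‖ :=
      numer_bound (Real.exp_pos _) (Real.exp_le_one_iff.mpr (by linarith))
    have hc1n : ‖c1‖ = |u| := by rw [hc1]; simp
    rw [hc1n]
    rw [div_le_div_iff₀ (by positivity) (abs_pos.mpr hu)]
    calc ‖1 + c1 * (T - 1)‖ * |u| ≤ ‖c2‖ * |u| := by
          exact mul_le_mul_of_nonneg_right hnum (abs_nonneg u)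
      _ = 1 * (|u| * ‖c2‖) := by ring
  calc ‖1 / c1 - R / c2 + E1 * ((1 + c1 * (T - 1)) / (c1 * c2))‖
      ≤ ‖1 / c1 - R / c2‖ + ‖E1 * ((1 + c1 * (T - 1)) / (c1 * c2))‖ := norm_add_le _ _
    _ ≤ (‖(1:ℂ) / c1‖ + ‖R / c2‖) + ‖E1 * ((1 + c1 * (T - 1)) / (c1 * c2))‖ := by
        gcongr; exact norm_sub_le _ _
    _ ≤ (1 / |u| + Real.exp y) + 1 / |u| := by rw [n1]; gcongr
    _ = Real.exp y + 2 / |u| := by ring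


section inner
variable {C u y : ℝ}

noncomputable def fy (u y : ℝ) : ℝ → ℂ := fun x =>
  (((if 0 ≤ x then max (Real.exp (y - x) - 1) 0
      else max (1 - Real.exp (y - x)) 0 : ℝ)) : ℂ) * Complex.exp (Complex.I * u * x)

lemma fy_meas : Measurable (fy u y) := by
  apply Measurable.mul
  · apply Complex.measurable_ofReal.comp
    apply Measurable.ite (measurableSet_le measurable_const measurable_id)
    · exact (((measurable_const.sub measurable_id).exp).sub measurable_const).max measurable_const
    · exact (measurable_const.sub ((measurable_const.sub measurable_id).exp)).max measurable_const
  · exact (Complex.measurable_ofReal.const_mul _).cexp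

lemma fy_norm (x : ℝ) : ‖fy u y x‖ =
    (if 0 ≤ x then max (Real.exp (y - x) - 1) 0 else max (1 - Real.exp (y - x)) 0) := by
  rw [fy, norm_mul, norm_cexp_I, mul_one, Complex.norm_real]
  split_ifs <;> exact abs_of_nonneg (le_max_right _ _)

lemma fy_int_Ioi0 : IntegrableOn (fy u y) (Ioi 0) := by
  apply Integrable.mono' ((exp_neg_integrableOn_Ioi 0 one_pos).const_mul (Real.exp y))
    fy_meas.aestronglyMeasurable
  rw [ae_restrict_iff' measurableSet_Ioi]
  filter_upwards with x hx
  rw [fy_norm, if_pos (le_of_lt hx)]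
  have h1 : Real.exp (y - x) = Real.exp y * Real.exp (-(1:ℝ) * x) := by
    rw [← Real.exp_add]; ring_nf
  rw [← h1]
  exact max_le (by linarith [Real.exp_pos (y - x)]) (Real.exp_pos _).le

lemma fy_int_Ioc : IntegrableOn (fy u y) (Ioc (-C) 0) := by
  apply Integrable.mono' (integrable_const (1 + Real.exp y)) fy_meas.aestronglyMeasurable
  rw [ae_restrict_iff' measurableSet_Ioc]
  filter_upwards with x hx
  rw [fy_norm]
  split_ifs with h
  · have : Real.exp (y - x) ≤ Real.exp y := Real.exp_le_exp.mpr (by linarith)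
    have := Real.exp_pos y
    exact max_le (by linarith) (by positivity)
  · have := Real.exp_pos (y - x)
    have := Real.exp_pos y
    exact max_le (by linarith) (by positivity)


lemma Ioi0_bound : ‖∫ x in Ioi 0, fy u y x‖ ≤ Real.exp y := by
  calc ‖∫ x in Ioi 0, fy u y x‖ ≤ ∫ x in Ioi 0, ‖fy u y x‖ := norm_integral_le_integral_norm _
    _ ≤ ∫ x in Ioi 0, Real.exp y * Real.exp (-(1:ℝ) * x) := by
        apply integral_mono_of_nonneg (Eventually.of_forall fun x => norm_nonneg _)
          ((exp_neg_integrableOn_Ioi 0 one_pos).const_mul (Real.exp y))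
        rw [EventuallyLE, ae_restrict_iff' measurableSet_Ioi]
        filter_upwards with x hx
        rw [fy_norm, if_pos (le_of_lt hx)]
        have h1 : Real.exp (y - x) = Real.exp y * Real.exp (-(1:ℝ) * x) := by
          rw [← Real.exp_add]; ring_nf
        rw [← h1]
        exact max_le (by linarith [Real.exp_pos (y - x)]) (Real.exp_pos _).le
    _ = Real.exp y := by
        rw [integral_const_mul]
        have : ∫ x in Ioi (0:ℝ), Real.exp (-(1:ℝ) * x) = 1 := by
          simp_rw [neg_one_mul]
          exact integral_exp_neg_Ioi_zero
        rw [this, mul_one]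

lemma Ioi0_zero (hy : y < 0) : (∫ x in Ioi (0:ℝ), fy u y x) = 0 := by
  have h : EqOn (fy u y) (fun _ => (0:ℂ)) (Ioi 0) := fun x hx => by
    rw [fy, if_pos (le_of_lt hx)]
    have h1 : Real.exp (y - x) ≤ 1 := Real.exp_le_one_iff.mpr (by simp at hx; linarith)
    rw [max_eq_right (by linarith)]
    simp
  rw [setIntegral_congr_fun measurableSet_Ioi h, integral_zero]

lemma Ioc_zero (hy : 0 ≤ y) : (∫ x in Ioc (-C) 0, fy u y x) = 0 := by
  rw [integral_Ioc_eq_integral_Ioo]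
  have h : EqOn (fy u y) (fun _ => (0:ℂ)) (Ioo (-C) 0) := fun x hx => by
    rw [fy, if_neg (not_le.mpr hx.2)]
    have h1 : 1 ≤ Real.exp (y - x) := Real.one_le_exp_iff.mpr (by linarith [hx.2])
    rw [max_eq_right (by linarith)]
    simp
  rw [setIntegral_congr_fun measurableSet_Ioo h, integral_zero]

lemma Ioc_bound (hC : 0 ≤ C) (hu : u ≠ 0) (hy : y < 0) :
    ‖∫ x in Ioc (-C) 0, fy u y x‖ ≤ Real.exp y + 2 / |u| := by
  set g : ℝ → ℂ := fun x =>
    Complex.exp (Complex.I * u * x) - (Real.exp y : ℂ) * Complex.exp ((Complex.I * u - 1) * x)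
    with hg
  have h' : ∀ x : ℝ, ((1 - Real.exp (y - x) : ℝ) : ℂ) * Complex.exp (Complex.I * u * x) = g x := by
    intro x
    rw [hg]
    push_cast
    rw [sub_mul, one_mul, ← Complex.exp_add, ← Complex.exp_add]
    have : (y:ℂ) - x + Complex.I * u * x = (y:ℂ) + (Complex.I * u - 1) * x := by ring
    rw [this]
  set a : ℝ := max (-C) y with ha
  have hya : y ≤ a := le_max_right _ _
  have ha0 : a ≤ 0 := max_le (neg_nonpos.mpr hC) hy.le
  have key : (∫ x in Ioc (-C) 0, fy u y x) = ∫ x in a..0, g x := by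
    rw [integral_Ioc_eq_integral_Ioo]
    have h : EqOn (fy u y) (fun x => (Ioi y).indicator g x) (Ioo (-C) 0) := fun x hx => by
      rw [fy, if_neg (not_le.mpr hx.2)]
      simp only [Set.indicator_apply]
      split_ifs with hxy
      · rw [max_eq_left (by
          have : Real.exp (y - x) ≤ 1 := Real.exp_le_one_iff.mpr (by simp at hxy; linarith)
          linarith)]
        exact h' x
      · have h1 : 1 ≤ Real.exp (y - x) := Real.one_le_exp_iff.mpr (by simp at hxy; linarith)
        rw [max_eq_right (by linarith)]
        simp
    rw [setIntegral_congr_fun measurableSet_Ioo h, setIntegral_indicator measurableSet_Ioi]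
    have hset : Ioo (-C) 0 ∩ Ioi y = Ioo a 0 := by
      ext x
      simp only [mem_inter_iff, mem_Ioo, mem_Ioi, ha, max_lt_iff]
      constructor
      · rintro ⟨⟨h1, h2⟩, h3⟩; exact ⟨⟨h1, h3⟩, h2⟩
      · rintro ⟨⟨h1, h3⟩, h2⟩; exact ⟨⟨h1, h2⟩, h3⟩
    rw [hset, ← integral_Ioc_eq_integral_Ioo, ← intervalIntegral.integral_of_le ha0]
  rw [key]
  have hcont1 : Continuous fun x : ℝ => Complex.exp (Complex.I * u * x) := by fun_prop
  have hcont2 : Continuous fun x : ℝ => Complex.exp ((Complex.I * u - 1) * x) := by fun_prop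
  have hsub : (∫ x in a..0, g x)
      = (∫ x in a..0, Complex.exp (Complex.I * u * x))
        - (Real.exp y : ℂ) * ∫ x in a..0, Complex.exp ((Complex.I * u - 1) * x) := by
    rw [hg]
    rw [intervalIntegral.integral_sub (hcont1.intervalIntegrable a 0)
      ((by fun_prop : Continuous fun x : ℝ => (Real.exp y : ℂ) * Complex.exp ((Complex.I * u - 1) * x)).intervalIntegrable a 0), intervalIntegral.integral_const_mul]
  rw [hsub, integral_exp_mul_complex (IuneZero hu), integral_exp_mul_complex (Iu1neZero u)]
  have e1 : Complex.exp (Complex.I * u * ((0:ℝ):ℂ)) = 1 := by simp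
  have e2 : Complex.exp ((Complex.I * u - 1) * ((0:ℝ):ℂ)) = 1 := by simp
  rw [e1, e2]
  exact P2_bound hu hya

lemma inner_bound (hC : 0 ≤ C) (hu : u ≠ 0) (y : ℝ) :
    ‖∫ x in Ioi (-C), fy u y x‖ ≤ Real.exp y + 2 / |u| := by
  rw [← Ioc_union_Ioi_eq_Ioi (neg_nonpos.mpr hC : -C ≤ (0:ℝ)),
    setIntegral_union (Ioc_disjoint_Ioi le_rfl) measurableSet_Ioi fy_int_Ioc fy_int_Ioi0]
  rcases lt_or_ge y 0 with hy | hy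
  · rw [Ioi0_zero hy, add_zero]
    exact Ioc_bound hC hu hy
  · rw [Ioc_zero hy, zero_add]
    have h2 : 0 ≤ 2 / |u| := by positivity
    linarith [Ioi0_bound (u := u) (y := y)]

end inner


/-- Let `Y` be a random variable with `E(e^Y) < ∞` and
`O(x) = E((e^{Y−x}−1)⁺)` for `x ≥ 0`, `O(x) = E((1−e^{Y−x})⁺)` for `x < 0`. Then
for any `C ≥ 0` and `u ≠ 0`,
`|∫_{−C}^∞ O(x) e^{iux} dx| ≤ E(e^Y) + (1 + 2|u|)/u²`. -/
theorem stmt6 {Ω : Type*} [MeasurableSpace Ω] (μ : Measure Ω) [IsProbabilityMeasure μ]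
    (Y : Ω → ℝ) (hY : Measurable Y)
    (hint : Integrable (fun ω => Real.exp (Y ω)) μ) :
    ∀ C : ℝ, 0 ≤ C → ∀ u : ℝ, u ≠ 0 →
      ‖∫ x in Set.Ioi (-C),
          (((if 0 ≤ x then ∫ ω, max (Real.exp (Y ω - x) - 1) 0 ∂μ
              else ∫ ω, max (1 - Real.exp (Y ω - x)) 0 ∂μ : ℝ)) : ℂ) *
            Complex.exp (Complex.I * (u : ℂ) * (x : ℂ))‖
        ≤ (∫ ω, Real.exp (Y ω) ∂μ) + (1 + 2 * |u|) / u ^ 2 := by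
  intro C hC u hu
  set E := ∫ ω, Real.exp (Y ω) ∂μ with hE
  have hE0 : 0 ≤ E := integral_nonneg fun ω => (Real.exp_pos _).le
  -- pointwise rewriting
  have hpt : ∀ x : ℝ,
      (((if 0 ≤ x then ∫ ω, max (Real.exp (Y ω - x) - 1) 0 ∂μ
          else ∫ ω, max (1 - Real.exp (Y ω - x)) 0 ∂μ : ℝ)) : ℂ) *
        Complex.exp (Complex.I * (u : ℂ) * (x : ℂ))
      = ∫ ω, fy u (Y ω) x ∂μ := by
    intro x
    simp only [fy]
    rw [integral_mul_const]
    congr 1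
    split_ifs with h
    · exact integral_ofReal.symm
    · exact integral_ofReal.symm
  -- joint measurability
  have hFm : Measurable (fun p : ℝ × Ω => fy u (Y p.2) p.1) := by
    apply Measurable.mul
    · apply Complex.measurable_ofReal.comp
      apply Measurable.ite (measurableSet_le measurable_const measurable_fst)
      · exact (((hY.comp measurable_snd).sub measurable_fst).exp.sub measurable_const).max
          measurable_const
      · exact (measurable_const.sub ((hY.comp measurable_snd).sub measurable_fst).exp).max
          measurable_const
    · exact Complex.measurable_exp.comp
        ((Complex.measurable_ofReal.comp measurable_fst).const_mul _)
  -- product integrability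
  have hFi : Integrable (fun p : ℝ × Ω => fy u (Y p.2) p.1)
      ((volume.restrict (Set.Ioi (-C))).prod μ) := by
    rw [integrable_prod_iff hFm.aestronglyMeasurable]
    constructor
    · refine Eventually.of_forall fun x => ?_
      apply Integrable.mono' (g := fun ω => 1 + Real.exp (-x) * Real.exp (Y ω))
        ((integrable_const 1).add (hint.const_mul (Real.exp (-x))))
        (hFm.comp (measurable_prodMk_left)).aestronglyMeasurable
      refine Eventually.of_forall fun ω => ?_
      simp only [Function.comp_apply, fy_norm]
      have hex : Real.exp (Y ω - x) = Real.exp (-x) * Real.exp (Y ω) := by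
        rw [← Real.exp_add]; ring_nf
      split_ifs with h
      · have := Real.exp_pos (Y ω - x)
        refine max_le (by rw [← hex]; linarith) (by positivity)
      · have : 0 ≤ Real.exp (-x) * Real.exp (Y ω) := by positivity
        have := Real.exp_pos (Y ω - x)
        refine max_le (by linarith) (by linarith)
    · apply Integrable.mono' (g := fun x => if 0 ≤ x then E * Real.exp (-x) else 1)
      · -- integrability of the dominating function on Ioi (-C)
        have hgm : Measurable (fun x : ℝ => if 0 ≤ x then E * Real.exp (-x) else 1) := by
          apply Measurable.ite (measurableSet_le measurable_const measurable_id)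
          · exact (measurable_id.neg.exp.const_mul E)
          · exact measurable_const
        have h1 : IntegrableOn (fun x : ℝ => if 0 ≤ x then E * Real.exp (-x) else 1)
            (Set.Ioc (-C) 0) := by
          apply Integrable.mono' (integrable_const (E + 1)) hgm.aestronglyMeasurable
          refine Eventually.of_forall fun x => ?_
          split_ifs with h
          · rw [Real.norm_of_nonneg (by positivity)]
            have h2 : Real.exp (-x) ≤ 1 := Real.exp_le_one_iff.mpr (by linarith)
            nlinarith
          · rw [Real.norm_of_nonneg (by norm_num)]; linarith
        have h2 : IntegrableOn (fun x : ℝ => if 0 ≤ x then E * Real.exp (-x) else 1)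
            (Set.Ioi 0) := by
          apply Integrable.mono' ((exp_neg_integrableOn_Ioi 0 one_pos).const_mul E)
            hgm.aestronglyMeasurable
          rw [ae_restrict_iff' measurableSet_Ioi]
          refine Eventually.of_forall fun x hx => ?_
          rw [if_pos (le_of_lt hx), Real.norm_of_nonneg (by positivity), neg_one_mul]
        have := h1.union h2
        rwa [Ioc_union_Ioi_eq_Ioi (neg_nonpos.mpr hC : -C ≤ (0:ℝ))] at this
      · exact hFm.norm.aestronglyMeasurable.integral_prod_right'
      · refine Eventually.of_forall fun x => ?_
        have hnn : 0 ≤ ∫ ω, ‖fy u (Y ω) x‖ ∂μ := integral_nonneg fun ω => norm_nonneg _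
        rw [Real.norm_of_nonneg hnn]
        split_ifs with h
        · calc ∫ ω, ‖fy u (Y ω) x‖ ∂μ
              ≤ ∫ ω, Real.exp (-x) * Real.exp (Y ω) ∂μ := by
                apply integral_mono_of_nonneg (Eventually.of_forall fun ω => norm_nonneg _)
                  (hint.const_mul (Real.exp (-x)))
                refine Eventually.of_forall fun ω => ?_
                simp only [fy_norm, if_pos h]
                have hex : Real.exp (Y ω - x) = Real.exp (-x) * Real.exp (Y ω) := by
                  rw [← Real.exp_add]; ring_nf
                have := Real.exp_pos (Y ω - x)
                refine max_le (by rw [← hex]; linarith) (by positivity)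
            _ = E * Real.exp (-x) := by rw [integral_const_mul]; ring
        · calc ∫ ω, ‖fy u (Y ω) x‖ ∂μ
              ≤ ∫ ω, (1:ℝ) ∂μ := by
                apply integral_mono_of_nonneg (Eventually.of_forall fun ω => norm_nonneg _)
                  (integrable_const 1)
                refine Eventually.of_forall fun ω => ?_
                simp only [fy_norm, if_neg h]
                have := Real.exp_pos (Y ω - x)
                exact max_le (by linarith) (by norm_num)
            _ = 1 := by simp
  -- put everything together
  calc ‖∫ x in Set.Ioi (-C),
          (((if 0 ≤ x then ∫ ω, max (Real.exp (Y ω - x) - 1) 0 ∂μ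
              else ∫ ω, max (1 - Real.exp (Y ω - x)) 0 ∂μ : ℝ)) : ℂ) *
            Complex.exp (Complex.I * (u : ℂ) * (x : ℂ))‖
      = ‖∫ x in Set.Ioi (-C), ∫ ω, fy u (Y ω) x ∂μ‖ := by
        congr 1
        exact integral_congr_ae (Eventually.of_forall fun x => hpt x)
    _ = ‖∫ ω, (∫ x in Set.Ioi (-C), fy u (Y ω) x) ∂μ‖ := by
        rw [integral_integral_swap hFi]
    _ ≤ ∫ ω, ‖∫ x in Set.Ioi (-C), fy u (Y ω) x‖ ∂μ := norm_integral_le_integral_norm _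
    _ ≤ ∫ ω, (Real.exp (Y ω) + 2 / |u|) ∂μ := by
        apply integral_mono_of_nonneg (Eventually.of_forall fun ω => norm_nonneg _)
          (hint.add (integrable_const _))
        exact Eventually.of_forall fun ω => inner_bound hC hu (Y ω)
    _ = E + 2 / |u| := by
        rw [integral_add hint (integrable_const _), integral_const]
        simp [hE]
    _ ≤ E + (1 + 2 * |u|) / u ^ 2 := by
        have h : 2 / |u| ≤ (1 + 2 * |u|) / u ^ 2 := by
          rw [div_le_div_iff₀ (abs_pos.mpr hu) (by positivity)]
          nlinarith [abs_nonneg u, sq_abs u]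
        linarith
end

section
/- Let (X,Y) be an ℝ^{m+n}-valued semimartingale with local characteristics (b, c, K), and let (b^X, c^X, K^X) and (b^Y, c^Y, K^Y) denote local characteristics of X and Y. Then the local exponent identity ψ^{(X,Y)}_t(u,v) = ψ^X_t(u) + ψ^Y_t(v) for all (u,v) ∈ ℝ^{m+n} (outside a dP⊗dt-null set) holds if and only if the joint diffusion matrix c is block-diagonal with blocks c^X, c^Y, and the joint Lévy kernel satisfies K(A) = K^X({x : (x,0) ∈ A}) + K^Y({y : (0,y) ∈ A}) for all Borel sets A (outside a dP⊗dt-null set). -/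
open MeasureTheory Filter Topology

/-- Componentwise truncation function `h(r) = r·1_{|r|≤1}`. -/
noncomputable def truncR (r : ℝ) : ℝ := if |r| ≤ 1 then r else 0

/-- The Lévy exponent associated with a Lévy–Khintchine triplet `(b, c, K)` on
`ℝ^ι`, relative to the componentwise truncation function. -/
noncomputable def levyExp {ι : Type*} [Fintype ι] (b : ι → ℝ) (c : Matrix ι ι ℝ)
    (K : Measure (ι → ℝ)) (u : ι → ℝ) : ℂ :=
  Complex.I * ((∑ i, u i * b i : ℝ) : ℂ)
    - (1 / 2 : ℂ) * ((∑ i, ∑ j, u i * c i j * u j : ℝ) : ℂ)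
    + ∫ x, (Complex.exp (Complex.I * ((∑ i, u i * x i : ℝ) : ℂ)) - 1
        - Complex.I * ((∑ i, u i * truncR (x i) : ℝ) : ℂ)) ∂K

namespace Stmt8

open Complex

/-- integrand of the Lévy exponent -/
noncomputable def fk {ι : Type*} [Fintype ι] (u x : ι → ℝ) : ℂ :=
  Complex.exp (Complex.I * ((∑ i, u i * x i : ℝ) : ℂ)) - 1
    - Complex.I * ((∑ i, u i * truncR (x i) : ℝ) : ℂ)

lemma levyExp_eq {ι : Type*} [Fintype ι] (b : ι → ℝ) (c : Matrix ι ι ℝ)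
    (K : Measure (ι → ℝ)) (u : ι → ℝ) :
    levyExp b c K u = Complex.I * ((∑ i, u i * b i : ℝ) : ℂ)
      - (1 / 2 : ℂ) * ((∑ i, ∑ j, u i * c i j * u j : ℝ) : ℂ)
      + ∫ x, fk u x ∂K := rfl

def sq {ι : Type*} [Fintype ι] (x : ι → ℝ) : ℝ := ∑ i, (x i) ^ 2

lemma sq_nonneg' {ι : Type*} [Fintype ι] (x : ι → ℝ) : 0 ≤ sq x :=
  Finset.sum_nonneg fun i _ => _root_.sq_nonneg _

lemma abs_truncR_le (r : ℝ) : |truncR r| ≤ 1 := by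
  unfold truncR; split
  · assumption
  · simp

lemma truncR_zero : truncR 0 = 0 := by simp [truncR]

lemma measurable_truncR : Measurable truncR :=
  Measurable.ite (measurableSet_le (_root_.continuous_abs.measurable) measurable_const)
    measurable_id measurable_const

lemma abs_apply_le_sqrt_sq {ι : Type*} [Fintype ι] (x : ι → ℝ) (i : ι) :
    |x i| ≤ Real.sqrt (sq x) := by
  rw [← Real.sqrt_sq_eq_abs]
  exact Real.sqrt_le_sqrt (Finset.single_le_sum (fun j _ => _root_.sq_nonneg (x j))
    (Finset.mem_univ i))

lemma abs_lin_le {ι : Type*} [Fintype ι] (u x : ι → ℝ) :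
    |∑ i, u i * x i| ≤ (∑ i, |u i|) * Real.sqrt (sq x) := by
  calc |∑ i, u i * x i| ≤ ∑ i, |u i * x i| := Finset.abs_sum_le_sum_abs _ _
    _ ≤ ∑ i, |u i| * Real.sqrt (sq x) := by
        refine Finset.sum_le_sum fun i _ => ?_
        rw [abs_mul]
        exact mul_le_mul_of_nonneg_left (abs_apply_le_sqrt_sq x i) (abs_nonneg _)
    _ = (∑ i, |u i|) * Real.sqrt (sq x) := by rw [Finset.sum_mul]

lemma norm_expI_sub_one_le_two (θ : ℝ) : ‖Complex.exp (Complex.I * θ) - 1‖ ≤ 2 := by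
  calc ‖Complex.exp (Complex.I * θ) - 1‖ ≤ ‖Complex.exp (Complex.I * θ)‖ + ‖(1:ℂ)‖ :=
        norm_sub_le _ _
    _ ≤ 2 := by
        rw [mul_comm, Complex.norm_exp_ofReal_mul_I]; norm_num

lemma expI_eq (θ : ℝ) :
    Complex.exp (Complex.I * θ) - 1
      = ((Real.cos θ - 1 : ℝ) : ℂ) + ((Real.sin θ : ℝ) : ℂ) * Complex.I := by
  rw [mul_comm, Complex.exp_mul_I, ← Complex.ofReal_cos, ← Complex.ofReal_sin]
  push_cast
  ring

lemma norm_expI_sub_one_le_abs (θ : ℝ) : ‖Complex.exp (Complex.I * θ) - 1‖ ≤ |θ| := by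
  rw [expI_eq, Complex.norm_add_mul_I]
  rw [← Real.sqrt_sq_eq_abs]
  apply Real.sqrt_le_sqrt
  nlinarith [Real.sin_sq_add_cos_sq θ, Real.one_sub_sq_div_two_le_cos (x := θ)]

lemma two_sub_two_cos_nonneg (θ : ℝ) : 0 ≤ 2 - 2 * Real.cos θ := by
  nlinarith [Real.cos_le_one θ]

lemma two_sub_two_cos_le_sq (θ : ℝ) : 2 - 2 * Real.cos θ ≤ θ ^ 2 := by
  nlinarith [Real.one_sub_sq_div_two_le_cos (x := θ)]

lemma two_sub_two_cos_le_four (θ : ℝ) : 2 - 2 * Real.cos θ ≤ 4 := by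
  nlinarith [Real.neg_one_le_cos θ]


section Bounds
variable {ι : Type*} [Fintype ι]

lemma norm_fk_le (u x : ι → ℝ) :
    ‖fk u x‖ ≤ (2 + ∑ i, |u i|) * (1 + ∑ i, |u i|) ^ 2 * min (sq x) 1 := by
  set M : ℝ := ∑ i, |u i| with hM
  have hM0 : 0 ≤ M := Finset.sum_nonneg fun i _ => abs_nonneg _
  have hs0 : 0 ≤ sq x := sq_nonneg' x
  by_cases hcase : sq x ≤ 1 / (1 + M) ^ 2
  · -- small case
    have hsqrt : Real.sqrt (sq x) ≤ 1 / (1 + M) := by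
      rw [show (1:ℝ) / (1 + M) = Real.sqrt ((1 / (1 + M))^2) by
        rw [Real.sqrt_sq (by positivity)]]
      exact Real.sqrt_le_sqrt (by rw [div_pow, one_pow]; exact hcase)
    have hxi : ∀ i, |x i| ≤ 1 := fun i =>
      (abs_apply_le_sqrt_sq x i).trans (hsqrt.trans (by
        rw [div_le_one (by positivity)]; linarith))
    have htr : (∑ i, u i * truncR (x i)) = ∑ i, u i * x i :=
      Finset.sum_congr rfl fun i _ => by rw [truncR, if_pos (hxi i)]
    set θ : ℝ := ∑ i, u i * x i with hθdef
    have hθ : |θ| ≤ M * Real.sqrt (sq x) := abs_lin_le u x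
    have hθ1 : |θ| ≤ 1 := by
      refine hθ.trans ?_
      calc M * Real.sqrt (sq x) ≤ M * (1 / (1 + M)) :=
            mul_le_mul_of_nonneg_left hsqrt hM0
        _ ≤ 1 := by rw [mul_one_div, div_le_one (by positivity)]; linarith
    have habs : ‖Complex.I * (θ : ℂ)‖ = |θ| := by
      rw [norm_mul, Complex.norm_I, Complex.norm_real, Real.norm_eq_abs, one_mul]
    have key : ‖fk u x‖ ≤ θ ^ 2 := by
      have := Complex.norm_exp_sub_one_sub_id_le (x := Complex.I * (θ:ℂ)) (by rw [habs]; exact hθ1)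
      rw [habs] at this
      have hfk : fk u x = Complex.exp (Complex.I * (θ:ℂ)) - 1 - Complex.I * (θ:ℂ) := by
        rw [fk, htr]
      rw [hfk]
      calc ‖Complex.exp (Complex.I * (θ:ℂ)) - 1 - Complex.I * (θ:ℂ)‖
          = ‖Complex.exp (Complex.I * (θ:ℂ)) - 1 - Complex.I * (θ:ℂ)‖ := rfl
        _ ≤ |θ| ^ 2 := this
        _ = θ ^ 2 := _root_.sq_abs θ
    have hθsq : θ ^ 2 ≤ M ^ 2 * sq x := by
      have h1 : |θ| ^ 2 ≤ (M * Real.sqrt (sq x)) ^ 2 := by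
        apply pow_le_pow_left₀ (abs_nonneg _) hθ 2
      rw [_root_.sq_abs] at h1
      calc θ ^ 2 ≤ (M * Real.sqrt (sq x)) ^ 2 := h1
        _ = M ^ 2 * Real.sqrt (sq x) ^ 2 := by ring
        _ = M ^ 2 * sq x := by rw [Real.sq_sqrt hs0]
    have hmin : min (sq x) 1 = sq x := min_eq_left (by
      refine hcase.trans ?_
      rw [div_le_one (by positivity)]
      nlinarith)
    rw [hmin]
    calc ‖fk u x‖ ≤ θ ^ 2 := key
      _ ≤ M ^ 2 * sq x := hθsq
      _ ≤ (2 + M) * (1 + M) ^ 2 * sq x := by nlinarith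
  · -- large case
    push_neg at hcase
    have h1 : ‖fk u x‖ ≤ 2 + M := by
      rw [fk]
      calc ‖Complex.exp (Complex.I * ((∑ i, u i * x i : ℝ) : ℂ)) - 1
            - Complex.I * ((∑ i, u i * truncR (x i) : ℝ) : ℂ)‖
          ≤ ‖Complex.exp (Complex.I * ((∑ i, u i * x i : ℝ) : ℂ)) - 1‖
            + ‖Complex.I * ((∑ i, u i * truncR (x i) : ℝ) : ℂ)‖ := norm_sub_le _ _
        _ ≤ 2 + M := by
            refine add_le_add (norm_expI_sub_one_le_two _) ?_
            rw [norm_mul, Complex.norm_I, one_mul,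
              Complex.norm_real, Real.norm_eq_abs]
            calc |∑ i, u i * truncR (x i)| ≤ ∑ i, |u i * truncR (x i)| :=
                  Finset.abs_sum_le_sum_abs _ _
              _ ≤ ∑ i, |u i| := Finset.sum_le_sum fun i _ => by
                  rw [abs_mul]
                  calc |u i| * |truncR (x i)| ≤ |u i| * 1 :=
                        mul_le_mul_of_nonneg_left (abs_truncR_le _) (abs_nonneg _)
                    _ = |u i| := mul_one _
    have h2 : 1 / (1 + M) ^ 2 ≤ min (sq x) 1 := by
      refine le_min hcase.le ?_
      rw [div_le_one (by positivity)]
      nlinarith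
    calc ‖fk u x‖ ≤ 2 + M := h1
      _ = (2 + M) * (1 + M) ^ 2 * (1 / (1 + M) ^ 2) := by field_simp
      _ ≤ (2 + M) * (1 + M) ^ 2 * min (sq x) 1 := by
          apply mul_le_mul_of_nonneg_left h2 (by positivity)

end Bounds

section Meas

lemma measurable_lin {ι : Type*} [Fintype ι] (u : ι → ℝ) :
    Measurable fun x : ι → ℝ => ∑ i, u i * x i :=
  Finset.measurable_sum _ fun i _ => (measurable_pi_apply i).const_mul _

lemma measurable_lintrunc {ι : Type*} [Fintype ι] (u : ι → ℝ) :
    Measurable fun x : ι → ℝ => ∑ i, u i * truncR (x i) :=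
  Finset.measurable_sum _ fun i _ =>
    ((measurable_truncR.comp (measurable_pi_apply i)).const_mul _)

lemma measurable_expI {ι : Type*} [Fintype ι] (u : ι → ℝ) :
    Measurable fun x : ι → ℝ => Complex.exp (Complex.I * ((∑ i, u i * x i : ℝ) : ℂ)) :=
  Complex.measurable_exp.comp ((Complex.measurable_ofReal.comp (measurable_lin u)).const_mul _)

lemma measurable_fk {ι : Type*} [Fintype ι] (u : ι → ℝ) : Measurable (fk u) := by
  apply Measurable.sub
  · exact (measurable_expI u).sub measurable_const
  · exact (Complex.measurable_ofReal.comp (measurable_lintrunc u)).const_mul _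

lemma measurable_sq {ι : Type*} [Fintype ι] : Measurable (sq (ι := ι)) :=
  Finset.measurable_sum _ fun i _ => (measurable_pi_apply i).pow measurable_const

end Meas

section Dom

lemma integrable_dom {α : Type*} [MeasurableSpace α] {μ : Measure α} {E' : Type*}
    [NormedAddCommGroup E'] {F : α → E'} {w : α → ℝ}
    (hF : AEStronglyMeasurable F μ)
    (hw : ∫⁻ a, ENNReal.ofReal (w a) ∂μ < ⊤) {C : ℝ} (hC : 0 ≤ C)
    (hle : ∀ a, ‖F a‖ ≤ C * w a) : Integrable F μ := by
  refine ⟨hF, ?_⟩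
  rw [hasFiniteIntegral_iff_norm]
  calc ∫⁻ a, ENNReal.ofReal ‖F a‖ ∂μ
      ≤ ∫⁻ a, ENNReal.ofReal (C * w a) ∂μ :=
        lintegral_mono fun a => ENNReal.ofReal_le_ofReal (hle a)
    _ = ∫⁻ a, ENNReal.ofReal C * ENNReal.ofReal (w a) ∂μ := by
        simp_rw [ENNReal.ofReal_mul hC]
    _ = ENNReal.ofReal C * ∫⁻ a, ENNReal.ofReal (w a) ∂μ :=
        lintegral_const_mul' _ _ ENNReal.ofReal_ne_top
    _ < ⊤ := ENNReal.mul_lt_top ENNReal.ofReal_lt_top hw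

lemma int_restrict_compl_singleton {α : Type*} [MeasurableSpace α]
    [MeasurableSingletonClass α] (μ : Measure α) (a : α) {F : α → ℂ}
    (h0 : F a = 0) (hi : Integrable F μ) :
    ∫ x, F x ∂(μ.restrict {a}ᶜ) = ∫ x, F x ∂μ := by
  rw [← integral_add_compl (measurableSet_singleton a) hi]
  have hz : ∫ x in ({a} : Set α), F x ∂μ = 0 := by
    have hae : ∀ᵐ x ∂(μ.restrict {a}), F x = 0 := by
      refine (ae_restrict_iff' (measurableSet_singleton a)).2 (ae_of_all _ ?_)
      intro x hx
      rw [Set.mem_singleton_iff] at hx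
      rw [hx, h0]
    rw [integral_congr_ae hae, integral_zero]
  rw [hz, zero_add]

end Dom

section MN

variable {m n : ℕ}

/-- projection onto the X-coordinates -/
def pX : ((Fin m ⊕ Fin n) → ℝ) → (Fin m → ℝ) := fun x i => x (Sum.inl i)

/-- projection onto the Y-coordinates -/
def pY : ((Fin m ⊕ Fin n) → ℝ) → (Fin n → ℝ) := fun x j => x (Sum.inr j)

/-- embedding of the X-coordinates -/
def eX : (Fin m → ℝ) → ((Fin m ⊕ Fin n) → ℝ) := fun x => Sum.elim x 0

/-- embedding of the Y-coordinates -/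
def eY : (Fin n → ℝ) → ((Fin m ⊕ Fin n) → ℝ) := fun y => Sum.elim 0 y

lemma measurable_pX : Measurable (pX (m := m) (n := n)) :=
  measurable_pi_lambda _ fun i => measurable_pi_apply _

lemma measurable_pY : Measurable (pY (m := m) (n := n)) :=
  measurable_pi_lambda _ fun j => measurable_pi_apply _

lemma measurable_eX : Measurable (eX (m := m) (n := n)) := by
  apply measurable_pi_lambda
  intro i
  cases i with
  | inl a => exact measurable_pi_apply a
  | inr b => exact measurable_const

lemma measurable_eY : Measurable (eY (m := m) (n := n)) := by
  apply measurable_pi_lambda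
  intro i
  cases i with
  | inl a => exact measurable_const
  | inr b => exact measurable_pi_apply b

lemma sq_split (z : (Fin m ⊕ Fin n) → ℝ) : sq z = sq (pX z) + sq (pY z) :=
  Fintype.sum_sum_type _

lemma sq_pX_le (z : (Fin m ⊕ Fin n) → ℝ) : sq (pX z) ≤ sq z := by
  rw [sq_split z]; linarith [sq_nonneg' (pY z)]

lemma sq_pY_le (z : (Fin m ⊕ Fin n) → ℝ) : sq (pY z) ≤ sq z := by
  rw [sq_split z]; linarith [sq_nonneg' (pX z)]

/-- the cross term in the integrand -/
noncomputable def G (u : Fin m → ℝ) (v : Fin n → ℝ) (z : (Fin m ⊕ Fin n) → ℝ) : ℂ :=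
  (Complex.exp (Complex.I * ((∑ i, u i * pX z i : ℝ) : ℂ)) - 1) *
  (Complex.exp (Complex.I * ((∑ j, v j * pY z j : ℝ) : ℂ)) - 1)

lemma measurable_G (u : Fin m → ℝ) (v : Fin n → ℝ) : Measurable (G u v) :=
  (((measurable_expI u).comp measurable_pX).sub measurable_const).mul
    (((measurable_expI v).comp measurable_pY).sub measurable_const)

lemma norm_G_le (u : Fin m → ℝ) (v : Fin n → ℝ) (z : (Fin m ⊕ Fin n) → ℝ) :
    ‖G u v z‖ ≤ ((∑ i, |u i|) * (∑ j, |v j|) + 4) * min (sq z) 1 := by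
  set Mu : ℝ := ∑ i, |u i| with hMu
  set Mv : ℝ := ∑ j, |v j| with hMv
  have hMu0 : 0 ≤ Mu := Finset.sum_nonneg fun i _ => abs_nonneg _
  have hMv0 : 0 ≤ Mv := Finset.sum_nonneg fun i _ => abs_nonneg _
  have hs0 : 0 ≤ sq z := sq_nonneg' z
  rw [G, norm_mul]
  by_cases hc : sq z ≤ 1
  · have hx : ‖Complex.exp (Complex.I * ((∑ i, u i * pX z i : ℝ) : ℂ)) - 1‖
        ≤ Mu * Real.sqrt (sq z) := by
      refine (norm_expI_sub_one_le_abs _).trans ?_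
      refine (abs_lin_le u (pX z)).trans ?_
      exact mul_le_mul_of_nonneg_left (Real.sqrt_le_sqrt (sq_pX_le z)) hMu0
    have hy : ‖Complex.exp (Complex.I * ((∑ j, v j * pY z j : ℝ) : ℂ)) - 1‖
        ≤ Mv * Real.sqrt (sq z) := by
      refine (norm_expI_sub_one_le_abs _).trans ?_
      refine (abs_lin_le v (pY z)).trans ?_
      exact mul_le_mul_of_nonneg_left (Real.sqrt_le_sqrt (sq_pY_le z)) hMv0
    have hmin : min (sq z) 1 = sq z := min_eq_left hc
    rw [hmin]
    calc ‖Complex.exp (Complex.I * ((∑ i, u i * pX z i : ℝ) : ℂ)) - 1‖ *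
          ‖Complex.exp (Complex.I * ((∑ j, v j * pY z j : ℝ) : ℂ)) - 1‖
        ≤ (Mu * Real.sqrt (sq z)) * (Mv * Real.sqrt (sq z)) :=
          mul_le_mul hx hy (norm_nonneg _) (by positivity)
      _ = Mu * Mv * (Real.sqrt (sq z) ^ 2) := by ring
      _ = Mu * Mv * sq z := by rw [Real.sq_sqrt hs0]
      _ ≤ (Mu * Mv + 4) * sq z := by nlinarith
  · have hmin : min (sq z) 1 = 1 := min_eq_right (le_of_not_ge hc)
    rw [hmin, mul_one]
    calc ‖Complex.exp (Complex.I * ((∑ i, u i * pX z i : ℝ) : ℂ)) - 1‖ *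
          ‖Complex.exp (Complex.I * ((∑ j, v j * pY z j : ℝ) : ℂ)) - 1‖
        ≤ 2 * 2 := mul_le_mul (norm_expI_sub_one_le_two _) (norm_expI_sub_one_le_two _)
            (norm_nonneg _) (by norm_num)
      _ ≤ Mu * Mv + 4 := by nlinarith

/-- the real, nonnegative cosine combination -/
noncomputable def R (u : Fin m → ℝ) (v : Fin n → ℝ) (z : (Fin m ⊕ Fin n) → ℝ) : ℝ :=
  (2 - 2 * Real.cos (∑ i, u i * pX z i)) * (2 - 2 * Real.cos (∑ j, v j * pY z j))

lemma R_nonneg (u : Fin m → ℝ) (v : Fin n → ℝ) (z : (Fin m ⊕ Fin n) → ℝ) : 0 ≤ R u v z :=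
  mul_nonneg (two_sub_two_cos_nonneg _) (two_sub_two_cos_nonneg _)

lemma measurable_R (u : Fin m → ℝ) (v : Fin n → ℝ) : Measurable (R u v) :=
  (measurable_const.sub
      ((Real.measurable_cos.comp ((measurable_lin u).comp measurable_pX)).const_mul 2)).mul
    (measurable_const.sub
      ((Real.measurable_cos.comp ((measurable_lin v).comp measurable_pY)).const_mul 2))

lemma norm_R_le (u : Fin m → ℝ) (v : Fin n → ℝ) (z : (Fin m ⊕ Fin n) → ℝ) :
    ‖R u v z‖ ≤ ((∑ i, |u i|) ^ 2 * (∑ j, |v j|) ^ 2 + 16) * min (sq z) 1 := by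
  set Mu : ℝ := ∑ i, |u i| with hMu
  set Mv : ℝ := ∑ j, |v j| with hMv
  have hMu0 : 0 ≤ Mu := Finset.sum_nonneg fun i _ => abs_nonneg _
  have hMv0 : 0 ≤ Mv := Finset.sum_nonneg fun i _ => abs_nonneg _
  have hs0 : 0 ≤ sq z := sq_nonneg' z
  rw [Real.norm_eq_abs, _root_.abs_of_nonneg (R_nonneg u v z), R]
  by_cases hc : sq z ≤ 1
  · have hx : 2 - 2 * Real.cos (∑ i, u i * pX z i) ≤ Mu ^ 2 * sq z := by
      refine (two_sub_two_cos_le_sq _).trans ?_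
      have h1 : |∑ i, u i * pX z i| ≤ Mu * Real.sqrt (sq z) :=
        (abs_lin_le u (pX z)).trans
          (mul_le_mul_of_nonneg_left (Real.sqrt_le_sqrt (sq_pX_le z)) hMu0)
      calc (∑ i, u i * pX z i) ^ 2 = |∑ i, u i * pX z i| ^ 2 := (_root_.sq_abs _).symm
        _ ≤ (Mu * Real.sqrt (sq z)) ^ 2 := pow_le_pow_left₀ (abs_nonneg _) h1 2
        _ = Mu ^ 2 * (Real.sqrt (sq z) ^ 2) := by ring
        _ = Mu ^ 2 * sq z := by rw [Real.sq_sqrt hs0]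
    have hy : 2 - 2 * Real.cos (∑ j, v j * pY z j) ≤ Mv ^ 2 * sq z := by
      refine (two_sub_two_cos_le_sq _).trans ?_
      have h1 : |∑ j, v j * pY z j| ≤ Mv * Real.sqrt (sq z) :=
        (abs_lin_le v (pY z)).trans
          (mul_le_mul_of_nonneg_left (Real.sqrt_le_sqrt (sq_pY_le z)) hMv0)
      calc (∑ j, v j * pY z j) ^ 2 = |∑ j, v j * pY z j| ^ 2 := (_root_.sq_abs _).symm
        _ ≤ (Mv * Real.sqrt (sq z)) ^ 2 := pow_le_pow_left₀ (abs_nonneg _) h1 2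
        _ = Mv ^ 2 * (Real.sqrt (sq z) ^ 2) := by ring
        _ = Mv ^ 2 * sq z := by rw [Real.sq_sqrt hs0]
    have hmin : min (sq z) 1 = sq z := min_eq_left hc
    rw [hmin]
    calc (2 - 2 * Real.cos (∑ i, u i * pX z i)) * (2 - 2 * Real.cos (∑ j, v j * pY z j))
        ≤ (Mu ^ 2 * sq z) * (Mv ^ 2 * sq z) :=
          mul_le_mul hx hy (two_sub_two_cos_nonneg _) (by positivity)
      _ = Mu ^ 2 * Mv ^ 2 * sq z * sq z := by ring
      _ ≤ Mu ^ 2 * Mv ^ 2 * sq z * 1 := by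
          refine mul_le_mul_of_nonneg_left hc (by positivity)
      _ ≤ (Mu ^ 2 * Mv ^ 2 + 16) * sq z := by nlinarith
  · have hmin : min (sq z) 1 = 1 := min_eq_right (le_of_not_ge hc)
    rw [hmin, mul_one]
    calc (2 - 2 * Real.cos (∑ i, u i * pX z i)) * (2 - 2 * Real.cos (∑ j, v j * pY z j))
        ≤ 4 * 4 := mul_le_mul (two_sub_two_cos_le_four _) (two_sub_two_cos_le_four _)
            (two_sub_two_cos_nonneg _) (by norm_num)
      _ ≤ Mu ^ 2 * Mv ^ 2 + 16 := by nlinarith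

end MN

section Core

variable {m n : ℕ} (K : Measure ((Fin m ⊕ Fin n) → ℝ))

lemma fk_zero {ι : Type*} [Fintype ι] (u : ι → ℝ) : fk u (0 : ι → ℝ) = 0 := by
  simp [fk, truncR_zero]

lemma Cfk_nonneg {ι : Type*} [Fintype ι] (u : ι → ℝ) :
    0 ≤ (2 + ∑ i, |u i|) * (1 + ∑ i, |u i|) ^ 2 := by
  have : 0 ≤ ∑ i, |u i| := Finset.sum_nonneg fun i _ => abs_nonneg _
  positivity

lemma int_fk_comp (hK2 : ∫⁻ z, ENNReal.ofReal (min (sq z) 1) ∂K < ⊤) {ι : Type*} [Fintype ι] {p : ((Fin m ⊕ Fin n) → ℝ) → (ι → ℝ)}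
    (hp : Measurable p) (hple : ∀ z, sq (p z) ≤ sq z) (u : ι → ℝ) :
    Integrable (fun z => fk u (p z)) K := by
  refine integrable_dom ((measurable_fk u).comp hp).aestronglyMeasurable hK2
    (Cfk_nonneg u) fun z => ?_
  refine (norm_fk_le u (p z)).trans ?_
  exact mul_le_mul_of_nonneg_left (min_le_min (hple z) le_rfl) (Cfk_nonneg u)

lemma integral_fk_marg (hK2 : ∫⁻ z, ENNReal.ofReal (min (sq z) 1) ∂K < ⊤) {ι : Type*} [Fintype ι] {p : ((Fin m ⊕ Fin n) → ℝ) → (ι → ℝ)}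
    (hp : Measurable p) (hple : ∀ z, sq (p z) ≤ sq z) (u : ι → ℝ) :
    ∫ x, fk u x ∂((K.map p).restrict ({(0 : ι → ℝ)}ᶜ)) = ∫ z, fk u (p z) ∂K := by
  have him : Integrable (fk u) (K.map p) :=
    (integrable_map_measure (measurable_fk u).aestronglyMeasurable hp.aemeasurable).2
      (int_fk_comp K hK2 hp hple u)
  rw [int_restrict_compl_singleton _ 0 (fk_zero u) him,
    integral_map hp.aemeasurable (measurable_fk u).aestronglyMeasurable]

lemma int_G (hK2 : ∫⁻ z, ENNReal.ofReal (min (sq z) 1) ∂K < ⊤) (u : Fin m → ℝ) (v : Fin n → ℝ) : Integrable (G u v) K := by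
  have hMu0 : (0:ℝ) ≤ ∑ i, |u i| := Finset.sum_nonneg fun i _ => abs_nonneg _
  have hMv0 : (0:ℝ) ≤ ∑ j, |v j| := Finset.sum_nonneg fun i _ => abs_nonneg _
  exact integrable_dom (measurable_G u v).aestronglyMeasurable hK2
    (by positivity) (norm_G_le u v)

lemma int_R (hK2 : ∫⁻ z, ENNReal.ofReal (min (sq z) 1) ∂K < ⊤) (u : Fin m → ℝ) (v : Fin n → ℝ) : Integrable (R u v) K := by
  have hMu0 : (0:ℝ) ≤ ∑ i, |u i| := Finset.sum_nonneg fun i _ => abs_nonneg _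
  have hMv0 : (0:ℝ) ≤ ∑ j, |v j| := Finset.sum_nonneg fun i _ => abs_nonneg _
  exact integrable_dom (measurable_R u v).aestronglyMeasurable hK2
    (by positivity) (norm_R_le u v)

lemma lin_elim (u : Fin m → ℝ) (v : Fin n → ℝ) (z : (Fin m ⊕ Fin n) → ℝ) :
    (∑ i, Sum.elim u v i * z i) = (∑ i, u i * pX z i) + (∑ j, v j * pY z j) :=
  Fintype.sum_sum_type _

lemma lintrunc_elim (u : Fin m → ℝ) (v : Fin n → ℝ) (z : (Fin m ⊕ Fin n) → ℝ) :
    (∑ i, Sum.elim u v i * truncR (z i))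
      = (∑ i, u i * truncR (pX z i)) + (∑ j, v j * truncR (pY z j)) :=
  Fintype.sum_sum_type _

lemma fk_elim (u : Fin m → ℝ) (v : Fin n → ℝ) (z : (Fin m ⊕ Fin n) → ℝ) :
    fk (Sum.elim u v) z = fk u (pX z) + fk v (pY z) + G u v z := by
  rw [fk, lin_elim, lintrunc_elim, fk, fk, G]
  push_cast
  rw [mul_add, Complex.exp_add]
  ring

lemma integral_fk_split (hK2 : ∫⁻ z, ENNReal.ofReal (min (sq z) 1) ∂K < ⊤) (u : Fin m → ℝ) (v : Fin n → ℝ) :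
    ∫ z, fk (Sum.elim u v) z ∂K
      = (∫ x, fk u x ∂((K.map pX).restrict ({(0 : Fin m → ℝ)}ᶜ)))
        + (∫ y, fk v y ∂((K.map pY).restrict ({(0 : Fin n → ℝ)}ᶜ)))
        + ∫ z, G u v z ∂K := by
  have i1 : Integrable (fun z => fk u (pX z)) K := int_fk_comp K hK2 measurable_pX sq_pX_le u
  have i2 : Integrable (fun z => fk v (pY z)) K := int_fk_comp K hK2 measurable_pY sq_pY_le v
  have i3 : Integrable (G u v) K := int_G K hK2 u v
  rw [integral_fk_marg K hK2 measurable_pX sq_pX_le u,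
    integral_fk_marg K hK2 measurable_pY sq_pY_le v]
  rw [show (fun z => fk (Sum.elim u v) z) = fun z => (fk u (pX z) + fk v (pY z)) + G u v z from
    funext fun z => by rw [fk_elim]]
  have i12 : Integrable (fun z => fk u (pX z) + fk v (pY z)) K := i1.add i2
  rw [integral_add i12 i3, integral_add i1 i2]

variable {c : Matrix (Fin m ⊕ Fin n) (Fin m ⊕ Fin n) ℝ}

lemma quad_elim (hcsymm : ∀ i j, c i j = c j i) (u : Fin m → ℝ) (v : Fin n → ℝ) :
    (∑ i, ∑ j, Sum.elim u v i * c i j * Sum.elim u v j)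
      = (∑ i, ∑ j, u i * c (Sum.inl i) (Sum.inl j) * u j)
        + (∑ i, ∑ j, v i * c (Sum.inr i) (Sum.inr j) * v j)
        + 2 * (∑ i, ∑ j, u i * c (Sum.inl i) (Sum.inr j) * v j) := by
  rw [Fintype.sum_sum_type]
  simp only [Fintype.sum_sum_type, Sum.elim_inl, Sum.elim_inr]
  rw [Finset.sum_add_distrib, Finset.sum_add_distrib]
  have hrl : (∑ a, ∑ b, v a * c (Sum.inr a) (Sum.inl b) * u b)
      = ∑ i, ∑ j, u i * c (Sum.inl i) (Sum.inr j) * v j := by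
    rw [Finset.sum_comm]
    exact Finset.sum_congr rfl fun i _ => Finset.sum_congr rfl fun j _ => by
      rw [hcsymm (Sum.inr j) (Sum.inl i)]; ring
  rw [hrl]
  ring

lemma levyExp_elim (hK2 : ∫⁻ z, ENNReal.ofReal (min (sq z) 1) ∂K < ⊤)
    (b : (Fin m ⊕ Fin n) → ℝ) (hcsymm : ∀ i j, c i j = c j i)
    (u : Fin m → ℝ) (v : Fin n → ℝ) :
    levyExp b c K (Sum.elim u v)
      = levyExp (fun i => b (Sum.inl i)) (c.submatrix Sum.inl Sum.inl)
          ((K.map pX).restrict ({(0 : Fin m → ℝ)}ᶜ)) u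
        + levyExp (fun j => b (Sum.inr j)) (c.submatrix Sum.inr Sum.inr)
          ((K.map pY).restrict ({(0 : Fin n → ℝ)}ᶜ)) v
        - ((∑ i, ∑ j, u i * c (Sum.inl i) (Sum.inr j) * v j : ℝ) : ℂ)
        + ∫ z, G u v z ∂K := by
  rw [levyExp_eq, levyExp_eq, levyExp_eq]
  rw [integral_fk_split K hK2 u v]
  have hb : (∑ i, Sum.elim u v i * b i)
      = (∑ i, u i * b (Sum.inl i)) + (∑ j, v j * b (Sum.inr j)) :=
    Fintype.sum_sum_type _
  rw [hb, quad_elim hcsymm u v]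
  simp only [Matrix.submatrix_apply]
  push_cast
  ring

end Core

section Fwd

lemma sum_four (a b : ℝ) :
    (Complex.exp (Complex.I * (a : ℂ)) - 1) * (Complex.exp (Complex.I * (b : ℂ)) - 1)
      + (Complex.exp (Complex.I * ((-a : ℝ) : ℂ)) - 1) * (Complex.exp (Complex.I * (b : ℂ)) - 1)
      + (Complex.exp (Complex.I * (a : ℂ)) - 1) * (Complex.exp (Complex.I * ((-b : ℝ) : ℂ)) - 1)
      + (Complex.exp (Complex.I * ((-a : ℝ) : ℂ)) - 1) * (Complex.exp (Complex.I * ((-b : ℝ) : ℂ)) - 1)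
      = (((2 - 2 * Real.cos a) * (2 - 2 * Real.cos b) : ℝ) : ℂ) := by
  have ea := expI_eq a
  have eb := expI_eq b
  have ena := expI_eq (-a)
  have enb := expI_eq (-b)
  rw [Real.cos_neg, Real.sin_neg] at ena enb
  have ha : Complex.exp (Complex.I * ((-a : ℝ) : ℂ))
      = ((Real.cos a - 1 : ℝ) : ℂ) - ((Real.sin a : ℝ) : ℂ) * Complex.I + 1 := by
    have := ena
    push_cast at this ⊢
    linear_combination this
  have ha' : Complex.exp (Complex.I * (a : ℂ))
      = ((Real.cos a - 1 : ℝ) : ℂ) + ((Real.sin a : ℝ) : ℂ) * Complex.I + 1 := by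
    linear_combination ea
  have hb' : Complex.exp (Complex.I * (b : ℂ))
      = ((Real.cos b - 1 : ℝ) : ℂ) + ((Real.sin b : ℝ) : ℂ) * Complex.I + 1 := by
    linear_combination eb
  have hb : Complex.exp (Complex.I * ((-b : ℝ) : ℂ))
      = ((Real.cos b - 1 : ℝ) : ℂ) - ((Real.sin b : ℝ) : ℂ) * Complex.I + 1 := by
    have := enb
    push_cast at this ⊢
    linear_combination this
  rw [ha, ha', hb, hb']
  push_cast
  ring

lemma lin_single {ι : Type*} [Fintype ι] [DecidableEq ι] (i₀ : ι) (s : ℝ) (x : ι → ℝ) :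
    ∑ i, (Pi.single i₀ s : ι → ℝ) i * x i = s * x i₀ := by
  rw [Finset.sum_eq_single i₀]
  · rw [Pi.single_eq_same]
  · intro b _ hb; rw [Pi.single_eq_of_ne hb, zero_mul]
  · intro h; exact absurd (Finset.mem_univ i₀) h

lemma Q_single {m n : ℕ} (c : Matrix (Fin m ⊕ Fin n) (Fin m ⊕ Fin n) ℝ)
    (i₀ : Fin m) (j₀ : Fin n) (s t : ℝ) :
    (∑ i, ∑ j, (Pi.single i₀ s : Fin m → ℝ) i * c (Sum.inl i) (Sum.inr j)
        * (Pi.single j₀ t : Fin n → ℝ) j)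
      = s * c (Sum.inl i₀) (Sum.inr j₀) * t := by
  rw [Finset.sum_eq_single i₀]
  · rw [Finset.sum_eq_single j₀]
    · rw [Pi.single_eq_same, Pi.single_eq_same]
    · intro b _ hb; rw [Pi.single_eq_of_ne hb, mul_zero]
    · intro h; exact absurd (Finset.mem_univ _) h
  · intro b _ hb
    apply Finset.sum_eq_zero
    intro j _
    rw [Pi.single_eq_of_ne hb, zero_mul, zero_mul]
  · intro h; exact absurd (Finset.mem_univ _) h

lemma lin_neg {ι : Type*} [Fintype ι] (u x : ι → ℝ) :
    ∑ i, (-u) i * x i = -∑ i, u i * x i := by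
  rw [← Finset.sum_neg_distrib]
  exact Finset.sum_congr rfl fun i _ => by simp [neg_mul]

lemma cos_trick {x : ℝ} (h1 : Real.cos x = 1) (h2 : Real.cos (Real.sqrt 2 * x) = 1) :
    x = 0 := by
  by_contra hx
  obtain ⟨k, hk⟩ := (Real.cos_eq_one_iff x).1 h1
  obtain ⟨l, hl⟩ := (Real.cos_eq_one_iff (Real.sqrt 2 * x)).1 h2
  have hk0 : (k : ℝ) ≠ 0 := by
    intro h
    apply hx
    rw [← hk, h, zero_mul]
  have h2pi : (2 * Real.pi) ≠ 0 := by
    have := Real.pi_ne_zero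
    positivity
  have hlk : (l : ℝ) = Real.sqrt 2 * k := by
    have : (l : ℝ) * (2 * Real.pi) = (Real.sqrt 2 * k) * (2 * Real.pi) := by
      rw [hl, ← hk]; ring
    exact mul_right_cancel₀ h2pi this
  apply irrational_sqrt_two
  refine ⟨(l : ℚ) / (k : ℚ), ?_⟩
  have hkq : ((k : ℚ) : ℝ) ≠ 0 := by push_cast; exact hk0
  push_cast
  rw [div_eq_iff (by push_cast at hkq ⊢; exact_mod_cast hk0), hlk]

end Fwd

section Fwd2

variable {m n : ℕ} (K : Measure ((Fin m ⊕ Fin n) → ℝ))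
variable {c : Matrix (Fin m ⊕ Fin n) (Fin m ⊕ Fin n) ℝ}

lemma R_int_zero (hK2 : ∫⁻ z, ENNReal.ofReal (min (sq z) 1) ∂K < ⊤)
    (hstar : ∀ (u : Fin m → ℝ) (v : Fin n → ℝ), ∫ z, G u v z ∂K
      = ((∑ i, ∑ j, u i * c (Sum.inl i) (Sum.inr j) * v j : ℝ) : ℂ))
    (u : Fin m → ℝ) (v : Fin n → ℝ) : ∫ z, R u v z ∂K = 0 := by
  have Qnl : ∀ (u' : Fin m → ℝ) (v' : Fin n → ℝ),
      (∑ i, ∑ j, (-u') i * c (Sum.inl i) (Sum.inr j) * v' j)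
        = -(∑ i, ∑ j, u' i * c (Sum.inl i) (Sum.inr j) * v' j) := by
    intro u' v'
    rw [← Finset.sum_neg_distrib]
    refine Finset.sum_congr rfl fun i _ => ?_
    rw [← Finset.sum_neg_distrib]
    refine Finset.sum_congr rfl fun j _ => ?_
    simp only [Pi.neg_apply]
    ring
  have Qnr : ∀ (u' : Fin m → ℝ) (v' : Fin n → ℝ),
      (∑ i, ∑ j, u' i * c (Sum.inl i) (Sum.inr j) * (-v') j)
        = -(∑ i, ∑ j, u' i * c (Sum.inl i) (Sum.inr j) * v' j) := by
    intro u' v'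
    rw [← Finset.sum_neg_distrib]
    refine Finset.sum_congr rfl fun i _ => ?_
    rw [← Finset.sum_neg_distrib]
    refine Finset.sum_congr rfl fun j _ => ?_
    simp only [Pi.neg_apply]
    ring
  have i1 := int_G K hK2 u v
  have i2 := int_G K hK2 (-u) v
  have i3 := int_G K hK2 u (-v)
  have i4 := int_G K hK2 (-u) (-v)
  have i12 : Integrable (fun z => G u v z + G (-u) v z) K := i1.add i2
  have i123 : Integrable (fun z => G u v z + G (-u) v z + G u (-v) z) K := i12.add i3
  have key : ∫ z, ((R u v z : ℝ) : ℂ) ∂K = 0 := by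
    calc ∫ z, ((R u v z : ℝ) : ℂ) ∂K
        = ∫ z, (G u v z + G (-u) v z + G u (-v) z + G (-u) (-v) z) ∂K := by
          refine integral_congr_ae (ae_of_all _ fun z => ?_)
          simp only [G, R]
          rw [show (∑ i, (-u) i * pX z i) = -(∑ i, u i * pX z i) from lin_neg u (pX z),
            show (∑ j, (-v) j * pY z j) = -(∑ j, v j * pY z j) from lin_neg v (pY z)]
          exact (sum_four _ _).symm
      _ = (∫ z, (G u v z + G (-u) v z + G u (-v) z) ∂K) + ∫ z, G (-u) (-v) z ∂K :=
          integral_add i123 i4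
      _ = ((∫ z, (G u v z + G (-u) v z) ∂K) + ∫ z, G u (-v) z ∂K) + ∫ z, G (-u) (-v) z ∂K := by
          rw [integral_add i12 i3]
      _ = (((∫ z, G u v z ∂K) + ∫ z, G (-u) v z ∂K) + ∫ z, G u (-v) z ∂K)
            + ∫ z, G (-u) (-v) z ∂K := by rw [integral_add i1 i2]
      _ = 0 := by
          rw [hstar u v, hstar (-u) v, hstar u (-v), hstar (-u) (-v), Qnl, Qnr, Qnl, Qnr]
          push_cast
          ring
  have h2 : ∫ z, ((R u v z : ℝ) : ℂ) ∂K = ((∫ z, R u v z ∂K : ℝ) : ℂ) :=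
    integral_ofReal (𝕜 := ℂ) (f := R u v) (μ := K)
  exact_mod_cast h2.symm.trans key

lemma ae_cos (hK2 : ∫⁻ z, ENNReal.ofReal (min (sq z) 1) ∂K < ⊤)
    (hstar : ∀ (u : Fin m → ℝ) (v : Fin n → ℝ), ∫ z, G u v z ∂K
      = ((∑ i, ∑ j, u i * c (Sum.inl i) (Sum.inr j) * v j : ℝ) : ℂ))
    (u : Fin m → ℝ) (v : Fin n → ℝ) :
    ∀ᵐ z ∂K, Real.cos (∑ i, u i * pX z i) = 1 ∨ Real.cos (∑ j, v j * pY z j) = 1 := by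
  have h0 := R_int_zero K hK2 hstar u v
  have hz := (integral_eq_zero_iff_of_nonneg (fun z => R_nonneg u v z) (int_R K hK2 u v)).1 h0
  filter_upwards [hz] with z hzz
  simp only [Pi.zero_apply, R] at hzz
  rcases mul_eq_zero.1 hzz with h | h
  · left; linarith
  · right; linarith

lemma ae_coord (hK2 : ∫⁻ z, ENNReal.ofReal (min (sq z) 1) ∂K < ⊤)
    (hstar : ∀ (u : Fin m → ℝ) (v : Fin n → ℝ), ∫ z, G u v z ∂K
      = ((∑ i, ∑ j, u i * c (Sum.inl i) (Sum.inr j) * v j : ℝ) : ℂ))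
    (i : Fin m) (j : Fin n) :
    ∀ᵐ z ∂K, z (Sum.inl i) = 0 ∨ z (Sum.inr j) = 0 := by
  have h11 := ae_cos K hK2 hstar (Pi.single i 1) (Pi.single j 1)
  have h21 := ae_cos K hK2 hstar (Pi.single i (Real.sqrt 2)) (Pi.single j 1)
  have h12 := ae_cos K hK2 hstar (Pi.single i 1) (Pi.single j (Real.sqrt 2))
  have h22 := ae_cos K hK2 hstar (Pi.single i (Real.sqrt 2)) (Pi.single j (Real.sqrt 2))
  simp only [lin_single, one_mul, pX, pY] at h11 h21 h12 h22
  filter_upwards [h11, h21, h12, h22] with z a11 a21 a12 a22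
  by_cases hx : z (Sum.inl i) = 0
  · exact Or.inl hx
  · right
    have hQ : Real.cos (z (Sum.inr j)) = 1
        ∧ Real.cos (Real.sqrt 2 * z (Sum.inr j)) = 1 := by
      by_cases hP1 : Real.cos (z (Sum.inl i)) = 1
      · have hP2 : ¬ Real.cos (Real.sqrt 2 * z (Sum.inl i)) = 1 :=
          fun h => hx (cos_trick hP1 h)
        exact ⟨a21.resolve_left hP2, a22.resolve_left hP2⟩
      · exact ⟨a11.resolve_left hP1, a12.resolve_left hP1⟩
    exact cos_trick hQ.1 hQ.2

lemma ae_axes (hK2 : ∫⁻ z, ENNReal.ofReal (min (sq z) 1) ∂K < ⊤)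
    (hstar : ∀ (u : Fin m → ℝ) (v : Fin n → ℝ), ∫ z, G u v z ∂K
      = ((∑ i, ∑ j, u i * c (Sum.inl i) (Sum.inr j) * v j : ℝ) : ℂ)) :
    ∀ᵐ z ∂K, pX z = 0 ∨ pY z = 0 := by
  have hall : ∀ᵐ z ∂K, ∀ i j, z (Sum.inl i) = 0 ∨ z (Sum.inr j) = 0 :=
    ae_all_iff.2 fun i => ae_all_iff.2 fun j => ae_coord K hK2 hstar i j
  filter_upwards [hall] with z hz
  by_cases hx : pX z = 0
  · exact Or.inl hx
  · right
    obtain ⟨i, hi⟩ := Function.ne_iff.1 hx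
    funext j
    exact ((hz i j).resolve_left hi)

end Fwd2

section MeasDecomp

lemma measure_eq_of_inter {α : Type*} [MeasurableSpace α] (K : Measure α) {W S T : Set α}
    (hT : MeasurableSet T) (h1 : W ∩ T = S) (h2 : K (W \ T) = 0) : K W = K S := by
  rw [← measure_inter_add_diff W hT, h2, add_zero, h1]

lemma meas_formula {m n : ℕ} (K : Measure ((Fin m ⊕ Fin n) → ℝ)) (hK0 : K {0} = 0)
    (hNae : ∀ᵐ z ∂K, pX z = 0 ∨ pY z = 0) {A : Set ((Fin m ⊕ Fin n) → ℝ)}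
    (hA : MeasurableSet A) :
    K A = ((K.map pX).restrict ({(0 : Fin m → ℝ)}ᶜ)) {x | Sum.elim x (0 : Fin n → ℝ) ∈ A}
        + ((K.map pY).restrict ({(0 : Fin n → ℝ)}ᶜ)) {y | Sum.elim (0 : Fin m → ℝ) y ∈ A} := by
  have hZx : MeasurableSet (pX ⁻¹' {(0 : Fin m → ℝ)} : Set ((Fin m ⊕ Fin n) → ℝ)) :=
    measurable_pX (measurableSet_singleton _)
  have hZy : MeasurableSet (pY ⁻¹' {(0 : Fin n → ℝ)} : Set ((Fin m ⊕ Fin n) → ℝ)) :=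
    measurable_pY (measurableSet_singleton _)
  have hnull : K ((pX ⁻¹' {(0 : Fin m → ℝ)})ᶜ ∩ (pY ⁻¹' {(0 : Fin n → ℝ)})ᶜ) = 0 := by
    rw [ae_iff] at hNae
    refine measure_mono_null ?_ hNae
    intro z hz
    simp only [Set.mem_inter_iff, Set.mem_compl_iff, Set.mem_preimage,
      Set.mem_singleton_iff] at hz
    simp only [Set.mem_setOf_eq]
    push_neg
    exact hz
  have h00 : K ((pX ⁻¹' {(0 : Fin m → ℝ)}) ∩ (pY ⁻¹' {(0 : Fin n → ℝ)})) = 0 := by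
    refine measure_mono_null ?_ hK0
    intro z hz
    simp only [Set.mem_inter_iff, Set.mem_preimage, Set.mem_singleton_iff] at hz
    have : z = 0 := funext fun i => by
      cases i with
      | inl a => exact congrFun hz.1 a
      | inr b => exact congrFun hz.2 b
    simp [this]
  have hSX : MeasurableSet {x : Fin m → ℝ | Sum.elim x (0 : Fin n → ℝ) ∈ A} :=
    measurable_eX hA
  have hSY : MeasurableSet {y : Fin n → ℝ | Sum.elim (0 : Fin m → ℝ) y ∈ A} :=
    measurable_eY hA
  have hTX : ((K.map pX).restrict ({(0 : Fin m → ℝ)}ᶜ))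
        {x | Sum.elim x (0 : Fin n → ℝ) ∈ A}
      = K (A ∩ ((pX ⁻¹' {(0 : Fin m → ℝ)})ᶜ ∩ (pY ⁻¹' {(0 : Fin n → ℝ)}))) := by
    rw [Measure.restrict_apply hSX,
      Measure.map_apply measurable_pX (hSX.inter (measurableSet_singleton _).compl)]
    refine measure_eq_of_inter K hZy ?_ ?_
    · ext z
      simp only [Set.mem_inter_iff, Set.mem_preimage, Set.mem_setOf_eq, Set.mem_compl_iff,
        Set.mem_singleton_iff]
      constructor
      · rintro ⟨⟨hzA, hzx⟩, hzy⟩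
        have hez : Sum.elim (pX z) (0 : Fin n → ℝ) = z := funext fun i => by
          cases i with
          | inl a => rfl
          | inr b => exact (congrFun hzy b).symm
        rw [hez] at hzA
        exact ⟨hzA, hzx, hzy⟩
      · rintro ⟨hzA, hzx, hzy⟩
        have hez : Sum.elim (pX z) (0 : Fin n → ℝ) = z := funext fun i => by
          cases i with
          | inl a => rfl
          | inr b => exact (congrFun hzy b).symm
        exact ⟨⟨by rw [hez]; exact hzA, hzx⟩, hzy⟩
    · refine measure_mono_null ?_ hnull
      rintro z ⟨hW, hzy⟩
      exact ⟨hW.2, hzy⟩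
  have hTY : ((K.map pY).restrict ({(0 : Fin n → ℝ)}ᶜ))
        {y | Sum.elim (0 : Fin m → ℝ) y ∈ A}
      = K (A ∩ ((pX ⁻¹' {(0 : Fin m → ℝ)}) ∩ (pY ⁻¹' {(0 : Fin n → ℝ)})ᶜ)) := by
    rw [Measure.restrict_apply hSY,
      Measure.map_apply measurable_pY (hSY.inter (measurableSet_singleton _).compl)]
    refine measure_eq_of_inter K hZx ?_ ?_
    · ext z
      simp only [Set.mem_inter_iff, Set.mem_preimage, Set.mem_setOf_eq, Set.mem_compl_iff,
        Set.mem_singleton_iff]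
      constructor
      · rintro ⟨⟨hzA, hzy⟩, hzx⟩
        have hez : Sum.elim (0 : Fin m → ℝ) (pY z) = z := funext fun i => by
          cases i with
          | inl a => exact (congrFun hzx a).symm
          | inr b => rfl
        rw [hez] at hzA
        exact ⟨hzA, hzx, hzy⟩
      · rintro ⟨hzA, hzx, hzy⟩
        have hez : Sum.elim (0 : Fin m → ℝ) (pY z) = z := funext fun i => by
          cases i with
          | inl a => exact (congrFun hzx a).symm
          | inr b => rfl
        exact ⟨⟨by rw [hez]; exact hzA, hzy⟩, hzx⟩
    · refine measure_mono_null ?_ hnull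
      rintro z ⟨hW, hzx⟩
      exact ⟨hzx, hW.2⟩
  rw [hTX, hTY]
  have d1 : K A = K (A ∩ pY ⁻¹' {(0 : Fin n → ℝ)}) + K (A \ pY ⁻¹' {(0 : Fin n → ℝ)}) :=
    (measure_inter_add_diff A hZy).symm
  have d2 : K (A ∩ pY ⁻¹' {(0 : Fin n → ℝ)})
      = K (A ∩ ((pX ⁻¹' {(0 : Fin m → ℝ)})ᶜ ∩ pY ⁻¹' {(0 : Fin n → ℝ)})) := by
    rw [← measure_inter_add_diff (A ∩ pY ⁻¹' {(0 : Fin n → ℝ)}) hZx]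
    have e2 : K (A ∩ pY ⁻¹' {(0 : Fin n → ℝ)} ∩ pX ⁻¹' {(0 : Fin m → ℝ)}) = 0 := by
      refine measure_mono_null ?_ h00
      rintro z ⟨⟨_, hzy⟩, hzx⟩
      exact ⟨hzx, hzy⟩
    rw [e2, zero_add]
    congr 1
    ext z
    simp only [Set.mem_diff, Set.mem_inter_iff, Set.mem_compl_iff]
    tauto
  have d3 : K (A \ pY ⁻¹' {(0 : Fin n → ℝ)})
      = K (A ∩ ((pX ⁻¹' {(0 : Fin m → ℝ)}) ∩ (pY ⁻¹' {(0 : Fin n → ℝ)})ᶜ)) := by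
    rw [← measure_inter_add_diff (A \ pY ⁻¹' {(0 : Fin n → ℝ)}) hZx]
    have e3 : K ((A \ pY ⁻¹' {(0 : Fin n → ℝ)}) \ pX ⁻¹' {(0 : Fin m → ℝ)}) = 0 := by
      refine measure_mono_null ?_ hnull
      rintro z ⟨⟨_, hzy⟩, hzx⟩
      exact ⟨hzx, hzy⟩
    rw [e3, add_zero]
    congr 1
    ext z
    simp only [Set.mem_diff, Set.mem_inter_iff, Set.mem_compl_iff]
    tauto
  rw [d1, d2, d3]

end MeasDecomp

theorem core {m n : ℕ} (b : (Fin m ⊕ Fin n) → ℝ)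
    (c : Matrix (Fin m ⊕ Fin n) (Fin m ⊕ Fin n) ℝ)
    (K : Measure ((Fin m ⊕ Fin n) → ℝ))
    (hK0 : K {0} = 0)
    (hK2 : ∫⁻ z, ENNReal.ofReal (min (∑ i, (z i) ^ 2) 1) ∂K < ⊤)
    (hcsymm : ∀ i j, c i j = c j i) :
    (∀ (u : Fin m → ℝ) (v : Fin n → ℝ),
        levyExp b c K (Sum.elim u v)
          = levyExp (fun i => b (Sum.inl i)) (c.submatrix Sum.inl Sum.inl)
              ((K.map pX).restrict ({(0 : Fin m → ℝ)}ᶜ)) u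
            + levyExp (fun j => b (Sum.inr j)) (c.submatrix Sum.inr Sum.inr)
              ((K.map pY).restrict ({(0 : Fin n → ℝ)}ᶜ)) v)
      ↔ ((∀ i j, c (Sum.inl i) (Sum.inr j) = 0) ∧
          ∀ A : Set ((Fin m ⊕ Fin n) → ℝ), MeasurableSet A →
            K A = ((K.map pX).restrict ({(0 : Fin m → ℝ)}ᶜ))
                {x | Sum.elim x (0 : Fin n → ℝ) ∈ A}
              + ((K.map pY).restrict ({(0 : Fin n → ℝ)}ᶜ))
                {y | Sum.elim (0 : Fin m → ℝ) y ∈ A}) := by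
  have hK2' : ∫⁻ z, ENNReal.ofReal (min (sq z) 1) ∂K < ⊤ := hK2
  constructor
  · intro H
    have hstar : ∀ (u : Fin m → ℝ) (v : Fin n → ℝ), ∫ z, G u v z ∂K
        = ((∑ i, ∑ j, u i * c (Sum.inl i) (Sum.inr j) * v j : ℝ) : ℂ) := by
      intro u v
      have h1 := levyExp_elim K hK2' b hcsymm u v
      rw [H u v] at h1
      linear_combination -h1
    have hax := ae_axes K hK2' hstar
    have hc0 : ∀ i j, c (Sum.inl i) (Sum.inr j) = 0 := by
      intro i j
      have h := hstar (Pi.single i 1) (Pi.single j 1)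
      rw [Q_single] at h
      have hG0 : ∫ z, G (Pi.single i 1) (Pi.single j 1) z ∂K = 0 := by
        refine (integral_congr_ae ?_).trans (integral_zero _ _)
        filter_upwards [hax] with z hz
        rcases hz with hx | hy
        · have h0 : pX z i = 0 := by simpa using congrFun hx i
          simp [G, lin_single, h0]
        · have h0 : pY z j = 0 := by simpa using congrFun hy j
          simp [G, lin_single, h0]
      rw [hG0] at h
      have h2 : (1 : ℝ) * c (Sum.inl i) (Sum.inr j) * 1 = 0 := by exact_mod_cast h.symm
      linarith
    exact ⟨hc0, fun A hA => meas_formula K hK0 hax hA⟩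
  · rintro ⟨hc0, hKf⟩ u v
    have hKdec : K = ((K.map pX).restrict ({(0 : Fin m → ℝ)}ᶜ)).map eX
        + ((K.map pY).restrict ({(0 : Fin n → ℝ)}ᶜ)).map eY := by
      refine Measure.ext fun A hA => ?_
      rw [Measure.add_apply, Measure.map_apply measurable_eX hA,
        Measure.map_apply measurable_eY hA]
      exact hKf A hA
    have hGX : (fun x : Fin m → ℝ => G u v (eX x)) = fun _ => (0 : ℂ) := funext fun x => by
      have h0 : (∑ j, v j * pY (eX x) j) = 0 := by
        apply Finset.sum_eq_zero
        intro j _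
        show v j * (0 : ℝ) = 0
        ring
      simp [G, h0]
    have hGY : (fun y : Fin n → ℝ => G u v (eY y)) = fun _ => (0 : ℂ) := funext fun y => by
      have h0 : (∑ i, u i * pX (eY y) i) = 0 := by
        apply Finset.sum_eq_zero
        intro i _
        show u i * (0 : ℝ) = 0
        ring
      simp [G, h0]
    have hi1 : Integrable (G u v) (((K.map pX).restrict ({(0 : Fin m → ℝ)}ᶜ)).map eX) := by
      refine (integrable_map_measure (measurable_G u v).aestronglyMeasurable
        measurable_eX.aemeasurable).2 ?_
      rw [show (G u v) ∘ eX = fun _ => (0 : ℂ) from hGX]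
      exact integrable_zero _ _ _
    have hi2 : Integrable (G u v) (((K.map pY).restrict ({(0 : Fin n → ℝ)}ᶜ)).map eY) := by
      refine (integrable_map_measure (measurable_G u v).aestronglyMeasurable
        measurable_eY.aemeasurable).2 ?_
      rw [show (G u v) ∘ eY = fun _ => (0 : ℂ) from hGY]
      exact integrable_zero _ _ _
    have hG0 : ∫ z, G u v z ∂K = 0 := by
      rw [hKdec, integral_add_measure hi1 hi2]
      have e1 : ∫ x, G u v x ∂(((K.map pX).restrict ({(0 : Fin m → ℝ)}ᶜ)).map eX) = 0 := by
        rw [integral_map measurable_eX.aemeasurable (measurable_G u v).aestronglyMeasurable]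
        refine (integral_congr_ae (ae_of_all _ fun x => ?_)).trans (integral_zero _ _)
        exact congrFun hGX x
      have e2 : ∫ y, G u v y ∂(((K.map pY).restrict ({(0 : Fin n → ℝ)}ᶜ)).map eY) = 0 := by
        rw [integral_map measurable_eY.aemeasurable (measurable_G u v).aestronglyMeasurable]
        refine (integral_congr_ae (ae_of_all _ fun y => ?_)).trans (integral_zero _ _)
        exact congrFun hGY y
      rw [e1, e2, add_zero]
    have hQ : (∑ i, ∑ j, u i * c (Sum.inl i) (Sum.inr j) * v j) = 0 :=
      Finset.sum_eq_zero fun i _ => Finset.sum_eq_zero fun j _ => by rw [hc0 i j]; ring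
    rw [levyExp_elim K hK2' b hcsymm u v, hG0, hQ]
    push_cast
    ring

end Stmt8

/-- Let `(X,Y)` be an `ℝ^{m+n}`-valued semimartingale with local
characteristics `(b, c, K)`; the local characteristics of the components are the
corresponding projections `(b^X, c^X, K^X)` and `(b^Y, c^Y, K^Y)`. Then the local
exponent identity `ψ^{(X,Y)}(u,v) = ψ^X(u) + ψ^Y(v)` for all `(u,v)` holds outside a
`dP ⊗ dt`-null set iff, outside a `dP ⊗ dt`-null set, `c` is block diagonal with
blocks `c^X, c^Y` and `K(A) = K^X{x : (x,0) ∈ A} + K^Y{y : (0,y) ∈ A}` for all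
Borel `A`. -/
theorem stmt8 {Ω : Type*} [MeasurableSpace Ω] (μ : Measure Ω) [IsProbabilityMeasure μ]
    {m n : ℕ}
    (b : ℝ → Ω → (Fin m ⊕ Fin n) → ℝ)
    (c : ℝ → Ω → Matrix (Fin m ⊕ Fin n) (Fin m ⊕ Fin n) ℝ)
    (K : ℝ → Ω → Measure ((Fin m ⊕ Fin n) → ℝ))
    (hK0 : ∀ t ω, K t ω {0} = 0)
    (hK2 : ∀ t ω,
      ∫⁻ x, ENNReal.ofReal (min (∑ i, (x i) ^ 2) 1) ∂(K t ω) < ⊤)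
    (hcsymm : ∀ t ω i j, c t ω i j = c t ω j i)
    (hcpsd : ∀ t ω (u : (Fin m ⊕ Fin n) → ℝ), 0 ≤ ∑ i, ∑ j, u i * c t ω i j * u j) :
    (∀ᵐ p ∂(μ.prod (volume.restrict (Set.Ici (0 : ℝ)))),
        ∀ (u : Fin m → ℝ) (v : Fin n → ℝ),
          levyExp (b p.2 p.1) (c p.2 p.1) (K p.2 p.1) (Sum.elim u v)
            = levyExp (fun i => b p.2 p.1 (Sum.inl i))
                ((c p.2 p.1).submatrix Sum.inl Sum.inl)
                (((K p.2 p.1).map (fun x i => x (Sum.inl i))).restrict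
                  ({(0 : Fin m → ℝ)}ᶜ)) u
              + levyExp (fun j => b p.2 p.1 (Sum.inr j))
                  ((c p.2 p.1).submatrix Sum.inr Sum.inr)
                  (((K p.2 p.1).map (fun x j => x (Sum.inr j))).restrict
                    ({(0 : Fin n → ℝ)}ᶜ)) v)
      ↔
    (∀ᵐ p ∂(μ.prod (volume.restrict (Set.Ici (0 : ℝ)))),
        (∀ i j, c p.2 p.1 (Sum.inl i) (Sum.inr j) = 0) ∧
          ∀ A : Set ((Fin m ⊕ Fin n) → ℝ), MeasurableSet A →
            K p.2 p.1 A
              = (((K p.2 p.1).map (fun x i => x (Sum.inl i))).restrict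
                  ({(0 : Fin m → ℝ)}ᶜ)) {x | Sum.elim x (0 : Fin n → ℝ) ∈ A}
                + (((K p.2 p.1).map (fun x j => x (Sum.inr j))).restrict
                    ({(0 : Fin n → ℝ)}ᶜ)) {y | Sum.elim (0 : Fin m → ℝ) y ∈ A}) := by
  exact Filter.eventually_congr (Filter.Eventually.of_forall fun p =>
    Stmt8.core (b p.2 p.1) (c p.2 p.1) (K p.2 p.1) (hK0 p.2 p.1) (hK2 p.2 p.1)
      (hcsymm p.2 p.1))
end

section
/- Let (N(x))_{x∈ℝ} be a family of nonnegative local martingales with a common localising sequence (τ_n), such that (ω,x) ↦ N_t(x)(ω) is jointly measurable, x ↦ N_t(x)(ω) is right-continuous with ∫_{−C}^∞ N_t(x)(ω)dx < ∞ for all C, the improper limits lim_{C→∞} ∫_{−C}^∞ e^{iux} N_t(x) dx exist for u ≠ 0, and for each n, t, u ≠ 0 the partial integrals ∫_{−C}^∞ e^{iux}N^{τ_n}_t(x)dx are dominated uniformly in C by an integrable random variable. Then, for every u ∈ ℝ\{0}, the process X_t(u) := ℱ{x ↦ N_t(x)}(u), provided it has càdlàg paths, is a local martingale with localising sequence (τ_n).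 -/
open MeasureTheory Filter Topology


lemma jm_aux {Ω : Type*} {m : MeasurableSpace Ω}
    (f : ℝ → Ω → ℝ) (hsec : ∀ x, Measurable (f x))
    (hrc : ∀ ω (x : ℝ), ContinuousWithinAt (fun y => f y ω) (Set.Ici x) x) :
    Measurable fun p : Ω × ℝ => f p.2 p.1 := by
  have key : ∀ k : ℕ, Measurable fun p : Ω × ℝ => f ((⌈p.2 * 2 ^ k⌉ : ℝ) / 2 ^ k) p.1 := by
    intro k
    have h1 : Measurable fun q : Ω × ℤ => f ((q.2 : ℝ) / 2 ^ k) q.1 :=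
      measurable_from_prod_countable_left fun z => hsec ((z : ℝ) / 2 ^ k)
    have h2 : Measurable fun p : Ω × ℝ => (p.1, ⌈p.2 * 2 ^ k⌉) :=
      measurable_fst.prodMk ((measurable_snd.mul_const _).ceil)
    exact h1.comp h2
  refine measurable_of_tendsto_metrizable' atTop key (tendsto_pi_nhds.2 fun p => ?_)
  have hd : Tendsto (fun k : ℕ => (⌈p.2 * 2 ^ k⌉ : ℝ) / 2 ^ k) atTop (𝓝[Set.Ici p.2] p.2) := by
    have hge : ∀ k : ℕ, p.2 ≤ (⌈p.2 * 2 ^ k⌉ : ℝ) / 2 ^ k := by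
      intro k
      rw [le_div_iff₀ (by positivity)]
      exact Int.le_ceil _
    refine tendsto_nhdsWithin_of_tendsto_nhds_of_eventually_within _ ?_
      (Eventually.of_forall fun k => hge k)
    have hub : Tendsto (fun k : ℕ => p.2 + ((1:ℝ)/2) ^ k) atTop (𝓝 (p.2 + 0)) :=
      tendsto_const_nhds.add
        (tendsto_pow_atTop_nhds_zero_of_lt_one (by norm_num) (by norm_num))
    rw [add_zero] at hub
    refine tendsto_of_tendsto_of_tendsto_of_le_of_le tendsto_const_nhds hub hge ?_
    intro k
    rw [div_le_iff₀ (by positivity)]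
    have h1 : ((⌈p.2 * 2 ^ k⌉ : ℝ)) < p.2 * 2 ^ k + 1 := Int.ceil_lt_add_one _
    have h2 : ((1:ℝ)/2) ^ k * 2 ^ k = 1 := by
      rw [div_pow, one_pow, div_mul_cancel₀]
      positivity
    nlinarith
  exact ((hrc p.1 p.2).tendsto).comp hd

lemma g_meas_aux {Ω : Type*} {m : MeasurableSpace Ω}
    (f : ℝ → Ω → ℝ) (hjm : Measurable fun p : Ω × ℝ => f p.2 p.1)
    (φ : ℝ → ℂ) (hφ : Measurable φ) (C : ℝ) :
    StronglyMeasurable fun ω => ∫ x in Set.Ioi (-C), (f x ω : ℂ) * φ x := by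
  have h1 : StronglyMeasurable fun p : Ω × ℝ => ((f p.2 p.1 : ℝ) : ℂ) * φ p.2 :=
    ((Complex.measurable_ofReal.comp hjm).mul (hφ.comp measurable_snd)).stronglyMeasurable
  exact h1.integral_prod_right'

lemma gr_meas_aux {Ω : Type*} {m : MeasurableSpace Ω}
    (f : ℝ → Ω → ℝ) (hjm : Measurable fun p : Ω × ℝ => f p.2 p.1)
    (φ : ℝ → ℝ) (hφ : Measurable φ) (C : ℝ) :
    StronglyMeasurable fun ω => ∫ x in Set.Ioi (-C), f x ω * φ x := by
  have h1 : StronglyMeasurable fun p : Ω × ℝ => f p.2 p.1 * φ p.2 :=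
    (hjm.mul (hφ.comp measurable_snd)).stronglyMeasurable
  exact h1.integral_prod_right'

lemma main_aux {Ω : Type*} {m0 : MeasurableSpace Ω} (μ : Measure Ω) [IsProbabilityMeasure μ]
    (F : Filtration ℝ m0) (M : ℝ → ℝ → Ω → ℝ) (u : ℝ)
    (hpos : ∀ x r ω, 0 ≤ M x r ω)
    (hrc : ∀ r ω (x : ℝ), ContinuousWithinAt (fun y => M y r ω) (Set.Ici x) x)
    (hint : ∀ r ω (C : ℝ), IntegrableOn (fun x => M x r ω) (Set.Ioi (-C)) volume)
    (hmart : ∀ x, Martingale (M x) F μ)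
    (hdom : ∀ t : ℝ, ∃ Z : Ω → ℝ, Integrable Z μ ∧ ∀ (C : ℝ) (ω : Ω),
        ‖∫ x in Set.Ioi (-C), ((M x t ω : ℝ) : ℂ) *
          Complex.exp (Complex.I * (u:ℂ) * (x:ℂ))‖ ≤ Z ω)
    (Y : ℝ → Ω → ℂ)
    (hY : ∀ t ω, Tendsto (fun C : ℝ => ∫ x in Set.Ioi (-C), ((M x t ω : ℝ):ℂ) *
        Complex.exp (Complex.I * (u:ℂ) * (x:ℂ))) atTop (𝓝 (Y t ω))) :
    Martingale Y F μ := by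
  classical
  have he_meas : Measurable fun x : ℝ => Complex.exp (Complex.I * (u:ℂ) * (x:ℂ)) :=
    Complex.measurable_exp.comp (Complex.measurable_ofReal.const_mul (Complex.I * (u:ℂ)))
  have hsec : ∀ x r, Measurable (M x r) := fun x r =>
    ((hmart x).stronglyMeasurable r).measurable.mono (F.le r) le_rfl
  have hjm0 : ∀ r, Measurable fun p : Ω × ℝ => M p.2 r p.1 := fun r =>
    jm_aux (fun x => M x r) (fun x => hsec x r) (fun ω x => hrc r ω x)
  have hjmF : ∀ r : ℝ, @Measurable (Ω × ℝ) ℝ (@Prod.instMeasurableSpace _ _ (F r) _) _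
      (fun p : Ω × ℝ => M p.2 r p.1) := fun r =>
    jm_aux (m := F r) (fun x => M x r) (fun x => ((hmart x).stronglyMeasurable r).measurable)
      (fun ω x => hrc r ω x)
  have hsecx : ∀ (r : ℝ) (ω : Ω), Measurable fun x => M x r ω := fun r ω =>
    (hjm0 r).comp measurable_prodMk_left
  have hgF : ∀ (C r : ℝ), StronglyMeasurable[F r]
      (fun ω => ∫ x in Set.Ioi (-C), ((M x r ω : ℝ):ℂ) *
        Complex.exp (Complex.I * (u:ℂ) * (x:ℂ))) :=
    fun C r => g_meas_aux (m := F r) (fun x => M x r) (hjmF r) _ he_meas C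
  have hYnat : ∀ (r : ℝ) ω, Tendsto (fun k : ℕ => ∫ x in Set.Ioi (-(k:ℝ)), ((M x r ω : ℝ):ℂ) *
      Complex.exp (Complex.I * (u:ℂ) * (x:ℂ))) atTop (𝓝 (Y r ω)) := fun r ω =>
    (hY r ω).comp tendsto_natCast_atTop_atTop
  have hYsm : ∀ r : ℝ, StronglyMeasurable[F r] (Y r) := fun r =>
    stronglyMeasurable_of_tendsto (f := fun (k : ℕ) ω => ∫ x in Set.Ioi (-(k:ℝ)),
        ((M x r ω : ℝ):ℂ) * Complex.exp (Complex.I * (u:ℂ) * (x:ℂ)))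
      atTop (fun k => hgF ((k:ℕ):ℝ) r) (tendsto_pi_nhds.2 fun ω => hYnat r ω)
  have hYbd : ∀ r : ℝ, ∃ Z : Ω → ℝ, Integrable Z μ ∧ (∀ ω, ‖Y r ω‖ ≤ Z ω) ∧
      ∀ (C : ℝ) ω, ‖∫ x in Set.Ioi (-C), ((M x r ω:ℝ):ℂ) *
        Complex.exp (Complex.I * (u:ℂ) * (x:ℂ))‖ ≤ Z ω := by
    intro r
    obtain ⟨Z, hZi, hZ⟩ := hdom r
    exact ⟨Z, hZi, fun ω => le_of_tendsto (hY r ω).norm (Eventually.of_forall fun C => hZ C ω), hZ⟩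
  have hYint : ∀ r : ℝ, Integrable (Y r) μ := by
    intro r
    obtain ⟨Z, hZi, hZb, -⟩ := hYbd r
    exact hZi.mono' (((hYsm r).mono (F.le r)).aestronglyMeasurable) (ae_of_all _ hZb)
  refine ⟨fun r => hYsm r, fun i j hij => ?_⟩
  refine (ae_eq_condExp_of_forall_setIntegral_eq (F.le i) (hYint j)
    (fun A hA _ => (hYint i).integrableOn)
    (fun A hA _ => ?_) ((hYsm i).aestronglyMeasurable)).symm
  obtain ⟨Zi, hZii, hZbi, hZi⟩ := hYbd i
  obtain ⟨Zj, hZij, hZbj, hZj⟩ := hYbd j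
  have hAm0 : MeasurableSet A := F.le i A hA
  have hgint : ∀ (C r : ℝ) (Z : Ω → ℝ), Integrable Z μ →
      (∀ (C' : ℝ) ω, ‖∫ x in Set.Ioi (-C'), ((M x r ω:ℝ):ℂ) *
        Complex.exp (Complex.I * (u:ℂ) * (x:ℂ))‖ ≤ Z ω) →
      Integrable (fun ω => ∫ x in Set.Ioi (-C), ((M x r ω:ℝ):ℂ) *
        Complex.exp (Complex.I * (u:ℂ) * (x:ℂ))) μ :=
    fun C r Z hZ hb => hZ.mono' (((hgF C r).mono (F.le r)).aestronglyMeasurable)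
      (ae_of_all _ fun ω => hb C ω)
  have hDCT : ∀ (r : ℝ) (Z : Ω → ℝ), Integrable Z μ →
      (∀ (C : ℝ) ω, ‖∫ x in Set.Ioi (-C), ((M x r ω:ℝ):ℂ) *
        Complex.exp (Complex.I * (u:ℂ) * (x:ℂ))‖ ≤ Z ω) →
      Tendsto (fun k : ℕ => ∫ ω in A, (∫ x in Set.Ioi (-(k:ℝ)), ((M x r ω:ℝ):ℂ) *
          Complex.exp (Complex.I * (u:ℂ) * (x:ℂ))) ∂μ)
        atTop (𝓝 (∫ ω in A, Y r ω ∂μ)) := by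
    intro r Z hZint hZb
    refine tendsto_integral_of_dominated_convergence Z
      (fun k => (((hgF ((k:ℕ):ℝ) r).mono (F.le r)).aestronglyMeasurable).restrict)
      hZint.restrict (fun k => ae_of_all _ fun ω => hZb _ ω)
      (ae_of_all _ fun ω => hYnat r ω)
  have hkey : ∀ C : ℝ, ∫ ω in A, (∫ x in Set.Ioi (-C), ((M x j ω:ℝ):ℂ) *
        Complex.exp (Complex.I * (u:ℂ) * (x:ℂ))) ∂μ
      = ∫ ω in A, (∫ x in Set.Ioi (-C), ((M x i ω:ℝ):ℂ) *
        Complex.exp (Complex.I * (u:ℂ) * (x:ℂ))) ∂μ := by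
    intro C
    have hTsm : StronglyMeasurable[F i] fun ω => ∫ x in Set.Ioi (-C), M x i ω := by
      have h := gr_meas_aux (m := F i) (fun x => M x i) (hjmF i) (fun _ => (1:ℝ))
        measurable_const C
      simpa using h
    have hBF : ∀ k : ℕ, MeasurableSet[F i] {ω | (∫ x in Set.Ioi (-C), M x i ω) ≤ (k:ℝ)} :=
      fun k => hTsm.measurable measurableSet_Iic
    have hABm : ∀ k : ℕ, MeasurableSet (A ∩ {ω | (∫ x in Set.Ioi (-C), M x i ω) ≤ (k:ℝ)}) :=
      fun k => hAm0.inter (F.le i _ (hBF k))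
    have hABmono : Monotone fun k : ℕ => A ∩ {ω | (∫ x in Set.Ioi (-C), M x i ω) ≤ (k:ℝ)} := by
      intro a b hab
      refine Set.inter_subset_inter_right _ fun ω hω => ?_
      simp only [Set.mem_setOf_eq] at hω ⊢
      exact hω.trans (Nat.cast_le.mpr hab)
    have hABU : (⋃ k : ℕ, (A ∩ {ω | (∫ x in Set.Ioi (-C), M x i ω) ≤ (k:ℝ)})) = A := by
      rw [← Set.inter_iUnion]
      have h : (⋃ k : ℕ, {ω | (∫ x in Set.Ioi (-C), M x i ω) ≤ (k:ℝ)}) = Set.univ := by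
        ext ω
        simp only [Set.mem_iUnion, Set.mem_univ, iff_true, Set.mem_setOf_eq]
        exact exists_nat_ge _
      rw [h, Set.inter_univ]
    have hconv : ∀ (r : ℝ) (Z : Ω → ℝ), Integrable Z μ →
        (∀ (C' : ℝ) ω, ‖∫ x in Set.Ioi (-C'), ((M x r ω:ℝ):ℂ) *
          Complex.exp (Complex.I * (u:ℂ) * (x:ℂ))‖ ≤ Z ω) →
        Tendsto (fun k : ℕ => ∫ ω in A ∩ {ω | (∫ x in Set.Ioi (-C), M x i ω) ≤ (k:ℝ)},
            (∫ x in Set.Ioi (-C), ((M x r ω:ℝ):ℂ) *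
              Complex.exp (Complex.I * (u:ℂ) * (x:ℂ))) ∂μ) atTop
          (𝓝 (∫ ω in A, (∫ x in Set.Ioi (-C), ((M x r ω:ℝ):ℂ) *
            Complex.exp (Complex.I * (u:ℂ) * (x:ℂ))) ∂μ)) := by
      intro r Z h1 h2
      have h := tendsto_setIntegral_of_monotone hABm hABmono
        (by rw [hABU]; exact (hgint C r Z h1 h2).integrableOn)
      rwa [hABU] at h
    suffices hk : ∀ k : ℕ, ∫ ω in A ∩ {ω | (∫ x in Set.Ioi (-C), M x i ω) ≤ (k:ℝ)},
          (∫ x in Set.Ioi (-C), ((M x j ω:ℝ):ℂ) *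
            Complex.exp (Complex.I * (u:ℂ) * (x:ℂ))) ∂μ
        = ∫ ω in A ∩ {ω | (∫ x in Set.Ioi (-C), M x i ω) ≤ (k:ℝ)},
          (∫ x in Set.Ioi (-C), ((M x i ω:ℝ):ℂ) *
            Complex.exp (Complex.I * (u:ℂ) * (x:ℂ))) ∂μ by
      have h1 := hconv j Zj hZij hZj
      have h2 := hconv i Zi hZii hZi
      rw [funext hk] at h1
      exact tendsto_nhds_unique h1 h2
    intro k
    set A' : Set Ω := A ∩ {ω | (∫ x in Set.Ioi (-C), M x i ω) ≤ (k:ℝ)} with hA'def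
    have hA'F : MeasurableSet[F i] A' := hA.inter (hBF k)
    have hA'm : MeasurableSet A' := hABm k
    have hA'bd : ∀ ω ∈ A', (∫ x in Set.Ioi (-C), M x i ω) ≤ (k:ℝ) := fun ω hω => hω.2
    have hMφint : ∀ (r : ℝ) ω (φ : ℝ → ℝ), Measurable φ → (∀ x, |φ x| ≤ 1) →
        IntegrableOn (fun x => M x r ω * φ x) (Set.Ioi (-C)) volume := by
      intro r ω φ hφm hφb
      refine (hint r ω C).mono' (((hsecx r ω).mul hφm).aestronglyMeasurable)
        (ae_of_all _ fun x => ?_)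
      rw [Real.norm_eq_abs, abs_mul]
      calc |M x r ω| * |φ x| ≤ |M x r ω| * 1 := by gcongr; exact hφb x
        _ = M x r ω := by rw [mul_one, abs_of_nonneg (hpos x r ω)]
    have piece : ∀ φ : ℝ → ℝ, Measurable φ → (∀ x, 0 ≤ φ x) → (∀ x, φ x ≤ 1) →
        IntegrableOn (fun ω => ∫ x in Set.Ioi (-C), M x j ω * φ x) A' μ ∧
        IntegrableOn (fun ω => ∫ x in Set.Ioi (-C), M x i ω * φ x) A' μ ∧
        ∫ ω in A', (∫ x in Set.Ioi (-C), M x j ω * φ x) ∂μ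
          = ∫ ω in A', (∫ x in Set.Ioi (-C), M x i ω * φ x) ∂μ := by
      intro φ hφm hφ0 hφ1
      have hφb : ∀ x, |φ x| ≤ 1 := fun x => abs_le.2 ⟨le_trans (by norm_num) (hφ0 x), hφ1 x⟩
      have h1 : ∀ (r : ℝ) ω, ENNReal.ofReal (∫ x in Set.Ioi (-C), M x r ω * φ x)
          = ∫⁻ x in Set.Ioi (-C), ENNReal.ofReal (M x r ω * φ x) := fun r ω =>
        ofReal_integral_eq_lintegral_ofReal (hMφint r ω φ hφm hφb)
          (ae_of_all _ fun x => mul_nonneg (hpos x r ω) (hφ0 x))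
      have h2 : ∀ r : ℝ, ∫⁻ ω in A', ∫⁻ x in Set.Ioi (-C),
            ENNReal.ofReal (M x r ω * φ x) ∂volume ∂μ
          = ∫⁻ x in Set.Ioi (-C), ∫⁻ ω in A', ENNReal.ofReal (M x r ω * φ x) ∂μ ∂volume :=
        fun r => lintegral_lintegral_swap
          ((ENNReal.measurable_ofReal.comp ((hjm0 r).mul (hφm.comp measurable_snd))).aemeasurable)
      have h3 : ∀ x : ℝ, ∫⁻ ω in A', ENNReal.ofReal (M x j ω * φ x) ∂μ
          = ∫⁻ ω in A', ENNReal.ofReal (M x i ω * φ x) ∂μ := by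
        intro x
        have hre : ∀ r : ℝ, ∫⁻ ω in A', ENNReal.ofReal (M x r ω * φ x) ∂μ
            = (∫⁻ ω in A', ENNReal.ofReal (M x r ω) ∂μ) * ENNReal.ofReal (φ x) := by
          intro r
          rw [← lintegral_mul_const _ ((hsec x r).ennreal_ofReal)]
          exact lintegral_congr fun ω => ENNReal.ofReal_mul (hpos x r ω)
        rw [hre j, hre i]
        congr 1
        rw [← ofReal_integral_eq_lintegral_ofReal ((hmart x).integrable j).integrableOn
            (ae_of_all _ fun ω => hpos x j ω),
          ← ofReal_integral_eq_lintegral_ofReal ((hmart x).integrable i).integrableOn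
            (ae_of_all _ fun ω => hpos x i ω)]
        congr 1
        exact ((hmart x).setIntegral_eq hij hA'F).symm
      have hLeq : ∫⁻ ω in A', ENNReal.ofReal (∫ x in Set.Ioi (-C), M x j ω * φ x) ∂μ
          = ∫⁻ ω in A', ENNReal.ofReal (∫ x in Set.Ioi (-C), M x i ω * φ x) ∂μ := by
        simp only [h1]
        rw [h2 j, h2 i]
        exact lintegral_congr fun x => h3 x
      have hLfin : ∫⁻ ω in A', ENNReal.ofReal (∫ x in Set.Ioi (-C), M x i ω * φ x) ∂μ < ⊤ := by
        have hle : ∀ ω ∈ A', ENNReal.ofReal (∫ x in Set.Ioi (-C), M x i ω * φ x)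
            ≤ ENNReal.ofReal (k:ℝ) := by
          intro ω hω
          refine ENNReal.ofReal_le_ofReal (le_trans ?_ (hA'bd ω hω))
          refine integral_mono (hMφint i ω φ hφm hφb) (hint i ω C) fun x => ?_
          nlinarith [hpos x i ω, hφ0 x, hφ1 x]
        calc ∫⁻ ω in A', ENNReal.ofReal (∫ x in Set.Ioi (-C), M x i ω * φ x) ∂μ
            ≤ ∫⁻ _ in A', ENNReal.ofReal (k:ℝ) ∂μ := setLIntegral_mono measurable_const hle
          _ = ENNReal.ofReal (k:ℝ) * μ A' := setLIntegral_const _ _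
          _ < ⊤ := ENNReal.mul_lt_top ENNReal.ofReal_lt_top (measure_lt_top μ A')
      have hintg : ∀ r : ℝ,
          (∫⁻ ω in A', ENNReal.ofReal (∫ x in Set.Ioi (-C), M x r ω * φ x) ∂μ < ⊤) →
          IntegrableOn (fun ω => ∫ x in Set.Ioi (-C), M x r ω * φ x) A' μ := by
        intro r hfin
        constructor
        · exact ((gr_meas_aux (fun x => M x r) (hjm0 r) φ hφm C).aestronglyMeasurable).restrict
        · rw [hasFiniteIntegral_iff_ofReal (ae_of_all _ fun ω =>
            integral_nonneg fun x => mul_nonneg (hpos x r ω) (hφ0 x))]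
          exact hfin
      have hij1 : IntegrableOn (fun ω => ∫ x in Set.Ioi (-C), M x j ω * φ x) A' μ :=
        hintg j (by rw [hLeq]; exact hLfin)
      have hii1 : IntegrableOn (fun ω => ∫ x in Set.Ioi (-C), M x i ω * φ x) A' μ :=
        hintg i hLfin
      refine ⟨hij1, hii1, ?_⟩
      have hoR : ENNReal.ofReal (∫ ω in A', (∫ x in Set.Ioi (-C), M x j ω * φ x) ∂μ)
          = ENNReal.ofReal (∫ ω in A', (∫ x in Set.Ioi (-C), M x i ω * φ x) ∂μ) := by
        rw [ofReal_integral_eq_lintegral_ofReal hij1 (ae_of_all _ fun ω =>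
            integral_nonneg fun x => mul_nonneg (hpos x j ω) (hφ0 x)),
          ofReal_integral_eq_lintegral_ofReal hii1 (ae_of_all _ fun ω =>
            integral_nonneg fun x => mul_nonneg (hpos x i ω) (hφ0 x))]
        exact hLeq
      exact (ENNReal.ofReal_eq_ofReal_iff
        (setIntegral_nonneg hA'm fun ω _ => integral_nonneg fun x =>
          mul_nonneg (hpos x j ω) (hφ0 x))
        (setIntegral_nonneg hA'm fun ω _ => integral_nonneg fun x =>
          mul_nonneg (hpos x i ω) (hφ0 x))).1 hoR
    -- the four pieces
    have hcosm : Measurable fun x : ℝ => Real.cos (u * x) :=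
      Real.measurable_cos.comp (measurable_id.const_mul u)
    have hsinm : Measurable fun x : ℝ => Real.sin (u * x) :=
      Real.measurable_sin.comp (measurable_id.const_mul u)
    obtain ⟨hPj1, hPi1, hPeq1⟩ := piece (fun x => max (Real.cos (u * x)) 0)
      (hcosm.max measurable_const) (fun x => le_max_right _ _)
      (fun x => max_le (Real.cos_le_one _) zero_le_one)
    obtain ⟨hPj2, hPi2, hPeq2⟩ := piece (fun x => max (-Real.cos (u * x)) 0)
      (hcosm.neg.max measurable_const) (fun x => le_max_right _ _)
      (fun x => max_le (by nlinarith [Real.neg_one_le_cos (u * x)]) zero_le_one)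
    obtain ⟨hPj3, hPi3, hPeq3⟩ := piece (fun x => max (Real.sin (u * x)) 0)
      (hsinm.max measurable_const) (fun x => le_max_right _ _)
      (fun x => max_le (Real.sin_le_one _) zero_le_one)
    obtain ⟨hPj4, hPi4, hPeq4⟩ := piece (fun x => max (-Real.sin (u * x)) 0)
      (hsinm.neg.max measurable_const) (fun x => le_max_right _ _)
      (fun x => max_le (by nlinarith [Real.neg_one_le_sin (u * x)]) zero_le_one)
    have hdec : ∀ (r : ℝ) ω, (∫ x in Set.Ioi (-C), ((M x r ω:ℝ):ℂ) *
          Complex.exp (Complex.I * (u:ℂ) * (x:ℂ)))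
        = ((∫ x in Set.Ioi (-C), M x r ω * max (Real.cos (u * x)) 0 : ℝ) : ℂ)
          - ((∫ x in Set.Ioi (-C), M x r ω * max (-Real.cos (u * x)) 0 : ℝ) : ℂ)
          + ((∫ x in Set.Ioi (-C), M x r ω * max (Real.sin (u * x)) 0 : ℝ) : ℂ) * Complex.I
          - ((∫ x in Set.Ioi (-C), M x r ω * max (-Real.sin (u * x)) 0 : ℝ) : ℂ) * Complex.I := by
      intro r ω
      have hptw : ∀ x : ℝ, ((M x r ω:ℝ):ℂ) * Complex.exp (Complex.I * (u:ℂ) * (x:ℂ))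
          = ((M x r ω * max (Real.cos (u * x)) 0 : ℝ):ℂ)
            - ((M x r ω * max (-Real.cos (u * x)) 0 : ℝ):ℂ)
            + ((M x r ω * max (Real.sin (u * x)) 0 : ℝ):ℂ) * Complex.I
            - ((M x r ω * max (-Real.sin (u * x)) 0 : ℝ):ℂ) * Complex.I := by
        intro x
        rw [show Complex.I * (u:ℂ) * (x:ℂ) = ((u * x : ℝ):ℂ) * Complex.I by push_cast; ring,
          Complex.exp_mul_I, ← Complex.ofReal_cos, ← Complex.ofReal_sin]
        have hc : ((max (Real.cos (u * x)) 0 : ℝ) : ℂ) - ((max (-Real.cos (u * x)) 0 : ℝ) : ℂ)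
            = ((Real.cos (u * x) : ℝ) : ℂ) := by
          norm_cast
          rcases le_total (Real.cos (u * x)) 0 with h | h
          · rw [max_eq_right h, max_eq_left (by linarith)]; ring
          · rw [max_eq_left h, max_eq_right (by linarith)]; ring
        have hs : ((max (Real.sin (u * x)) 0 : ℝ) : ℂ) - ((max (-Real.sin (u * x)) 0 : ℝ) : ℂ)
            = ((Real.sin (u * x) : ℝ) : ℂ) := by
          norm_cast
          rcases le_total (Real.sin (u * x)) 0 with h | h
          · rw [max_eq_right h, max_eq_left (by linarith)]; ring
          · rw [max_eq_left h, max_eq_right (by linarith)]; ring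
        simp only [Complex.ofReal_mul]
        linear_combination (-((M x r ω : ℝ):ℂ)) * hc - ((M x r ω : ℝ):ℂ) * Complex.I * hs
      rw [integral_congr_ae (ae_of_all _ hptw)]
      have hb0 : ∀ a : ℝ, (-1 : ℝ) ≤ max a 0 := fun a => (by norm_num : (-1:ℝ) ≤ 0).trans (le_max_right _ _)
      have i1 : Integrable (fun x : ℝ => ((M x r ω * max (Real.cos (u * x)) 0 : ℝ) : ℂ))
          (volume.restrict (Set.Ioi (-C))) := (hMφint r ω _ (hcosm.max measurable_const)
        (fun x => abs_le.2 ⟨hb0 _, max_le (Real.cos_le_one _) zero_le_one⟩)).ofReal (𝕜 := ℂ)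
      have i2 : Integrable (fun x : ℝ => ((M x r ω * max (-Real.cos (u * x)) 0 : ℝ) : ℂ))
          (volume.restrict (Set.Ioi (-C))) := (hMφint r ω _ (hcosm.neg.max measurable_const)
        (fun x => abs_le.2 ⟨hb0 _, max_le (by simp only [Pi.neg_apply]; nlinarith [Real.neg_one_le_cos (u * x)]) zero_le_one⟩)).ofReal (𝕜 := ℂ)
      have i3 : Integrable (fun x : ℝ => ((M x r ω * max (Real.sin (u * x)) 0 : ℝ) : ℂ))
          (volume.restrict (Set.Ioi (-C))) := (hMφint r ω _ (hsinm.max measurable_const)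
        (fun x => abs_le.2 ⟨hb0 _, max_le (Real.sin_le_one _) zero_le_one⟩)).ofReal (𝕜 := ℂ)
      have i4 : Integrable (fun x : ℝ => ((M x r ω * max (-Real.sin (u * x)) 0 : ℝ) : ℂ))
          (volume.restrict (Set.Ioi (-C))) := (hMφint r ω _ (hsinm.neg.max measurable_const)
        (fun x => abs_le.2 ⟨hb0 _, max_le (by simp only [Pi.neg_apply]; nlinarith [Real.neg_one_le_sin (u * x)]) zero_le_one⟩)).ofReal (𝕜 := ℂ)
      have i3I : Integrable (fun x : ℝ => ((M x r ω * max (Real.sin (u * x)) 0 : ℝ) : ℂ) * Complex.I)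
          (volume.restrict (Set.Ioi (-C))) := i3.mul_const _
      have i4I : Integrable (fun x : ℝ => ((M x r ω * max (-Real.sin (u * x)) 0 : ℝ) : ℂ) * Complex.I)
          (volume.restrict (Set.Ioi (-C))) := i4.mul_const _
      have i12 : Integrable (fun x : ℝ => ((M x r ω * max (Real.cos (u * x)) 0 : ℝ) : ℂ)
          - ((M x r ω * max (-Real.cos (u * x)) 0 : ℝ) : ℂ)) (volume.restrict (Set.Ioi (-C))) := i1.sub i2
      have i123 : Integrable (fun x : ℝ => ((M x r ω * max (Real.cos (u * x)) 0 : ℝ) : ℂ)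
          - ((M x r ω * max (-Real.cos (u * x)) 0 : ℝ) : ℂ)
          + ((M x r ω * max (Real.sin (u * x)) 0 : ℝ) : ℂ) * Complex.I)
          (volume.restrict (Set.Ioi (-C))) := i12.add i3I
      have o1 : (∫ x in Set.Ioi (-C), ((M x r ω * max (Real.cos (u * x)) 0 : ℝ) : ℂ))
          = ((∫ x in Set.Ioi (-C), M x r ω * max (Real.cos (u * x)) 0 : ℝ) : ℂ) :=
        integral_ofReal (𝕜 := ℂ)
      have o2 : (∫ x in Set.Ioi (-C), ((M x r ω * max (-Real.cos (u * x)) 0 : ℝ) : ℂ))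
          = ((∫ x in Set.Ioi (-C), M x r ω * max (-Real.cos (u * x)) 0 : ℝ) : ℂ) :=
        integral_ofReal (𝕜 := ℂ)
      have o3 : (∫ x in Set.Ioi (-C), ((M x r ω * max (Real.sin (u * x)) 0 : ℝ) : ℂ))
          = ((∫ x in Set.Ioi (-C), M x r ω * max (Real.sin (u * x)) 0 : ℝ) : ℂ) :=
        integral_ofReal (𝕜 := ℂ)
      have o4 : (∫ x in Set.Ioi (-C), ((M x r ω * max (-Real.sin (u * x)) 0 : ℝ) : ℂ))
          = ((∫ x in Set.Ioi (-C), M x r ω * max (-Real.sin (u * x)) 0 : ℝ) : ℂ) :=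
        integral_ofReal (𝕜 := ℂ)
      rw [integral_sub i123 i4I, integral_add i12 i3I, integral_sub i1 i2,
        integral_mul_const, integral_mul_const, o1, o2, o3, o4]
    have hlin : ∀ r : ℝ,
        IntegrableOn (fun ω => ∫ x in Set.Ioi (-C), M x r ω * max (Real.cos (u * x)) 0) A' μ →
        IntegrableOn (fun ω => ∫ x in Set.Ioi (-C), M x r ω * max (-Real.cos (u * x)) 0) A' μ →
        IntegrableOn (fun ω => ∫ x in Set.Ioi (-C), M x r ω * max (Real.sin (u * x)) 0) A' μ →
        IntegrableOn (fun ω => ∫ x in Set.Ioi (-C), M x r ω * max (-Real.sin (u * x)) 0) A' μ →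
        ∫ ω in A', (∫ x in Set.Ioi (-C), ((M x r ω:ℝ):ℂ) *
            Complex.exp (Complex.I * (u:ℂ) * (x:ℂ))) ∂μ
          = ((∫ ω in A', (∫ x in Set.Ioi (-C), M x r ω * max (Real.cos (u * x)) 0) ∂μ : ℝ) : ℂ)
            - ((∫ ω in A', (∫ x in Set.Ioi (-C), M x r ω * max (-Real.cos (u * x)) 0) ∂μ : ℝ) : ℂ)
            + ((∫ ω in A', (∫ x in Set.Ioi (-C), M x r ω * max (Real.sin (u * x)) 0) ∂μ : ℝ) : ℂ)
              * Complex.I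
            - ((∫ ω in A', (∫ x in Set.Ioi (-C), M x r ω * max (-Real.sin (u * x)) 0) ∂μ : ℝ) : ℂ)
              * Complex.I := by
      intro r k1 k2 k3 k4
      rw [integral_congr_ae (ae_of_all _ fun ω => hdec r ω)]
      have j1 : Integrable (fun ω => ((∫ x in Set.Ioi (-C), M x r ω * max (Real.cos (u * x)) 0 : ℝ) : ℂ))
          (μ.restrict A') := k1.ofReal (𝕜 := ℂ)
      have j2 : Integrable (fun ω => ((∫ x in Set.Ioi (-C), M x r ω * max (-Real.cos (u * x)) 0 : ℝ) : ℂ))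
          (μ.restrict A') := k2.ofReal (𝕜 := ℂ)
      have j3 : Integrable (fun ω => ((∫ x in Set.Ioi (-C), M x r ω * max (Real.sin (u * x)) 0 : ℝ) : ℂ))
          (μ.restrict A') := k3.ofReal (𝕜 := ℂ)
      have j4 : Integrable (fun ω => ((∫ x in Set.Ioi (-C), M x r ω * max (-Real.sin (u * x)) 0 : ℝ) : ℂ))
          (μ.restrict A') := k4.ofReal (𝕜 := ℂ)
      have j3I : Integrable (fun ω => ((∫ x in Set.Ioi (-C), M x r ω * max (Real.sin (u * x)) 0 : ℝ) : ℂ)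
          * Complex.I) (μ.restrict A') := j3.mul_const _
      have j4I : Integrable (fun ω => ((∫ x in Set.Ioi (-C), M x r ω * max (-Real.sin (u * x)) 0 : ℝ) : ℂ)
          * Complex.I) (μ.restrict A') := j4.mul_const _
      have j12 : Integrable (fun ω => ((∫ x in Set.Ioi (-C), M x r ω * max (Real.cos (u * x)) 0 : ℝ) : ℂ)
          - ((∫ x in Set.Ioi (-C), M x r ω * max (-Real.cos (u * x)) 0 : ℝ) : ℂ)) (μ.restrict A') := j1.sub j2
      have j123 : Integrable (fun ω => ((∫ x in Set.Ioi (-C), M x r ω * max (Real.cos (u * x)) 0 : ℝ) : ℂ)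
          - ((∫ x in Set.Ioi (-C), M x r ω * max (-Real.cos (u * x)) 0 : ℝ) : ℂ)
          + ((∫ x in Set.Ioi (-C), M x r ω * max (Real.sin (u * x)) 0 : ℝ) : ℂ) * Complex.I)
          (μ.restrict A') := j12.add j3I
      have o1 : (∫ ω in A', ((∫ x in Set.Ioi (-C), M x r ω * max (Real.cos (u * x)) 0 : ℝ) : ℂ) ∂μ)
          = ((∫ ω in A', (∫ x in Set.Ioi (-C), M x r ω * max (Real.cos (u * x)) 0) ∂μ : ℝ) : ℂ) :=
        integral_ofReal (𝕜 := ℂ)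
      have o2 : (∫ ω in A', ((∫ x in Set.Ioi (-C), M x r ω * max (-Real.cos (u * x)) 0 : ℝ) : ℂ) ∂μ)
          = ((∫ ω in A', (∫ x in Set.Ioi (-C), M x r ω * max (-Real.cos (u * x)) 0) ∂μ : ℝ) : ℂ) :=
        integral_ofReal (𝕜 := ℂ)
      have o3 : (∫ ω in A', ((∫ x in Set.Ioi (-C), M x r ω * max (Real.sin (u * x)) 0 : ℝ) : ℂ) ∂μ)
          = ((∫ ω in A', (∫ x in Set.Ioi (-C), M x r ω * max (Real.sin (u * x)) 0) ∂μ : ℝ) : ℂ) :=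
        integral_ofReal (𝕜 := ℂ)
      have o4 : (∫ ω in A', ((∫ x in Set.Ioi (-C), M x r ω * max (-Real.sin (u * x)) 0 : ℝ) : ℂ) ∂μ)
          = ((∫ ω in A', (∫ x in Set.Ioi (-C), M x r ω * max (-Real.sin (u * x)) 0) ∂μ : ℝ) : ℂ) :=
        integral_ofReal (𝕜 := ℂ)
      rw [integral_sub j123 j4I, integral_add j12 j3I, integral_sub j1 j2,
        integral_mul_const, integral_mul_const, o1, o2, o3, o4]
    rw [hlin j hPj1 hPj2 hPj3 hPj4, hlin i hPi1 hPi2 hPi3 hPi4, hPeq1, hPeq2, hPeq3, hPeq4]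
  have h1 := hDCT j Zj hZij hZj
  have h2 := hDCT i Zi hZii hZi
  rw [funext fun k : ℕ => hkey ((k:ℕ):ℝ)] at h1
  exact tendsto_nhds_unique h2 h1

/-- Let `(N(x))_{x∈ℝ}` be a family of nonnegative local martingales
with a common localising sequence `(τ_n)`, jointly measurable, right-continuous and
integrable in `x` on half-lines, such that the improper Fourier limits exist and the
partial integrals of the stopped processes are dominated by integrable random
variables. Then for every `u ≠ 0` the improper Fourier transform
`X_t(u) = ℱ{x ↦ N_t(x)}(u)`, provided it has càdlàg paths, is a local martingale with
localising sequence `(τ_n)`. -/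
theorem stmt17 {Ω : Type*} {m0 : MeasurableSpace Ω} (μ : Measure Ω)
    [IsProbabilityMeasure μ] (F : Filtration ℝ m0)
    (N : ℝ → ℝ → Ω → ℝ)
    (hNpos : ∀ x t ω, 0 ≤ N x t ω)
    (hNjm : ∀ t : ℝ, Measurable (fun p : Ω × ℝ => N p.2 t p.1))
    (hNrc : ∀ t ω (x : ℝ), ContinuousWithinAt (fun y => N y t ω) (Set.Ici x) x)
    (hNint : ∀ t ω (C : ℝ), IntegrableOn (fun x => N x t ω) (Set.Ioi (-C)) volume)
    (τ : ℕ → Ω → ℝ)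
    (hτ : ∀ n, IsStoppingTime F (fun ω => ((τ n ω : ℝ) : WithTop ℝ)))
    (hτtop : ∀ ω, Tendsto (fun n => τ n ω) atTop atTop)
    (hNloc : ∀ x n, Martingale (fun t ω => N x (min t (τ n ω)) ω) F μ)
    (hdom : ∀ (n : ℕ) (t : ℝ) (u : ℝ), u ≠ 0 →
      ∃ Z : Ω → ℝ, Integrable Z μ ∧ ∀ (C : ℝ) (ω : Ω),
        ‖∫ x in Set.Ioi (-C), ((N x (min t (τ n ω)) ω : ℝ) : ℂ) *
            Complex.exp (Complex.I * (u : ℂ) * (x : ℂ))‖ ≤ Z ω)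
    (X : ℝ → ℝ → Ω → ℂ)
    (hX : ∀ (u : ℝ), u ≠ 0 → ∀ t ω,
      Tendsto
        (fun C : ℝ => ∫ x in Set.Ioi (-C), ((N x t ω : ℝ) : ℂ) *
          Complex.exp (Complex.I * (u : ℂ) * (x : ℂ)))
        atTop (𝓝 (X u t ω)))
    (hXcadlag : ∀ (u : ℝ), u ≠ 0 → ∀ ω t,
      ContinuousWithinAt (fun s => X u s ω) (Set.Ici t) t ∧
        ∃ l, Tendsto (fun s => X u s ω) (nhdsWithin t (Set.Iio t)) (𝓝 l)) :
    ∀ (u : ℝ), u ≠ 0 →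
      ∀ n, Martingale (fun t ω => X u (min t (τ n ω)) ω) F μ := by
  intro u hu n
  exact main_aux μ F (fun x r ω => N x (min r (τ n ω)) ω) u
    (fun x r ω => hNpos _ _ _)
    (fun r ω x => hNrc _ ω x)
    (fun r ω C => hNint _ ω C)
    (fun x => hNloc x n)
    (fun t => hdom n t u hu)
    (fun t ω => X u (min t (τ n ω)) ω)
    (fun t ω => hX u hu (min t (τ n ω)) ω)
end
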